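/- arXiv:1612.06230 — 3 statements merged into one kernel-verified Lean document; each statement's English description precedes it below -/
import Mathlib

section
/- Let (u_n) be a sequence in H¹_μ(I) which is bounded in the sense that there exist μ-gradients v_n ∈ Γ(u_n) with sup_n (‖u_n‖²_{L²(μ)} + ‖v_n‖²_{L²(μ)}) < ∞. Then there exist a subsequence (u_{n_k}) and a function u such that u_{n_k}(x) → u(x) for μ-almost every x ∈ V = I \ (M ∪ A), i.e. at μ-a.e. point where the tangent space to μ is ℝ. -/
open MeasureTheory Filter Set
open scoped ENNReal Topology

/-- `v ∈ Γ(u)`: `v` is a `μ`-gradient of `u`. -/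
def IsGradient (μ : Measure ℝ) (u v : ℝ → ℝ) : Prop :=
  ∃ U : ℕ → ℝ → ℝ, (∀ n, ContDiff ℝ 1 (U n)) ∧
    Tendsto (fun n => eLpNorm (fun x => U n x - u x) 2 μ) atTop (nhds 0) ∧
    Tendsto (fun n => eLpNorm (fun x => deriv (U n) x - v x) 2 μ) atTop (nhds 0)

lemma sq_eLpNorm_two (μ : Measure ℝ) (g : ℝ → ℝ) :
    eLpNorm g 2 μ ^ 2 = ∫⁻ t, (‖g t‖₊ : ℝ≥0∞) ^ 2 ∂μ := by
  rw [eLpNorm_eq_lintegral_rpow_enorm_toReal two_ne_zero ENNReal.ofNat_ne_top,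
    ← ENNReal.rpow_natCast _ 2, ← ENNReal.rpow_mul]
  simp only [enorm_eq_nnnorm]
  norm_num

lemma smooth_osc (μ : Measure ℝ) (f : ℝ → ℝ) (hf : Measurable f)
    (hle : volume.withDensity (fun x => ENNReal.ofReal (f x)) ≤ μ)
    (U : ℝ → ℝ) (hU : ContDiff ℝ 1 U) (x y : ℝ) (hxy : x ≤ y)
    (hfin : ∫⁻ t in Set.Ioo x y, (ENNReal.ofReal (f t))⁻¹ ≠ ⊤) :
    ENNReal.ofReal ((U y - U x) ^ 2) ≤
      (∫⁻ t, (‖deriv U t‖₊ : ℝ≥0∞) ^ 2 ∂μ) * ∫⁻ t in Set.Ioo x y, (ENNReal.ofReal (f t))⁻¹ := by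
  set w : ℝ → ℝ≥0∞ := fun t => ENNReal.ofReal (f t) with hw
  have hwmeas : Measurable w := hf.ennreal_ofReal
  have hUc : Continuous (deriv U) := hU.continuous_deriv le_rfl
  -- interchange Ioo / Ioc
  have hIooIoc : ∀ g : ℝ → ℝ≥0∞, ∫⁻ t in Set.Ioo x y, g t = ∫⁻ t in Set.Ioc x y, g t := by
    intro g
    exact setLIntegral_congr Ioo_ae_eq_Ioc
  rw [hIooIoc] at hfin ⊢
  -- a.e. positivity of w on Ioc x y
  have hae : ∀ᵐ t ∂(volume.restrict (Set.Ioc x y)), w t ≠ 0 := by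
    have h1 := ae_lt_top (hwmeas.inv) hfin
    filter_upwards [h1] with t ht
    intro h0
    rw [Pi.inv_apply, h0, ENNReal.inv_zero] at ht
    exact (lt_irrefl _ ht).elim
  -- FTC
  have hftc : U y - U x = ∫ t in Set.Ioc x y, deriv U t := by
    rw [← intervalIntegral.integral_of_le hxy]
    exact (intervalIntegral.integral_deriv_eq_sub
      (fun t _ => (hU.differentiable one_ne_zero).differentiableAt)
      (hUc.intervalIntegrable x y)).symm
  have habs : |U y - U x| ≤ ∫ t in Set.Ioc x y, |deriv U t| := by
    rw [hftc]
    simpa [Real.norm_eq_abs] using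
      norm_integral_le_integral_norm (μ := volume.restrict (Set.Ioc x y)) (deriv U)
  -- pass to lintegral
  have hint : IntegrableOn (fun t => |deriv U t|) (Set.Ioc x y) volume :=
    (hUc.abs.integrableOn_Icc (a := x) (b := y)).mono_set Set.Ioc_subset_Icc_self
  have hlin : ENNReal.ofReal (∫ t in Set.Ioc x y, |deriv U t|)
      = ∫⁻ t in Set.Ioc x y, ENNReal.ofReal |deriv U t| := by
    exact MeasureTheory.ofReal_integral_eq_lintegral_ofReal hint
      (Filter.Eventually.of_forall fun t => abs_nonneg _)
  -- Cauchy-Schwarz setup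
  set ν := volume.restrict (Set.Ioc x y) with hν
  have hadmeas : Measurable (fun t => ENNReal.ofReal |deriv U t|) :=
    (hUc.abs.measurable).ennreal_ofReal
  have hameas : Measurable (fun t => ENNReal.ofReal |deriv U t| * (w t) ^ ((2:ℝ)⁻¹)) :=
    hadmeas.mul (hwmeas.pow_const _)
  have hbmeas : Measurable (fun t => (w t) ^ (-(2:ℝ)⁻¹)) := hwmeas.pow_const _
  have hconj : Real.HolderConjugate 2 2 := Real.HolderConjugate.two_two
  have hpt : ∀ᵐ t ∂ν, ENNReal.ofReal |deriv U t| ≤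
      (ENNReal.ofReal |deriv U t| * (w t) ^ ((2:ℝ)⁻¹)) * ((w t) ^ (-(2:ℝ)⁻¹)) := by
    filter_upwards [hae] with t ht
    rw [mul_assoc, ← ENNReal.rpow_add _ _ ht ENNReal.ofReal_ne_top]
    norm_num
  have hCS : (∫⁻ t, ENNReal.ofReal |deriv U t| ∂ν) ≤
      (∫⁻ t, (ENNReal.ofReal |deriv U t| * (w t) ^ ((2:ℝ)⁻¹)) ^ (2:ℝ) ∂ν) ^ ((2:ℝ)⁻¹) *
      (∫⁻ t, ((w t) ^ (-(2:ℝ)⁻¹)) ^ (2:ℝ) ∂ν) ^ ((2:ℝ)⁻¹) := by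
    refine le_trans (lintegral_mono_ae hpt) ?_
    have h := ENNReal.lintegral_mul_le_Lp_mul_Lq ν hconj hameas.aemeasurable hbmeas.aemeasurable
    simpa [one_div] using h
  -- identify the two factors
  have hA : (∫⁻ t, (ENNReal.ofReal |deriv U t| * (w t) ^ ((2:ℝ)⁻¹)) ^ (2:ℝ) ∂ν)
      ≤ ∫⁻ t, (‖deriv U t‖₊ : ℝ≥0∞) ^ 2 ∂μ := by
    have heq : ∀ t, (ENNReal.ofReal |deriv U t| * (w t) ^ ((2:ℝ)⁻¹)) ^ (2:ℝ)
        = (w : ℝ → ℝ≥0∞) t * (‖deriv U t‖₊ : ℝ≥0∞) ^ 2 := by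
      intro t
      rw [ENNReal.mul_rpow_of_nonneg _ _ (by norm_num : (0:ℝ) ≤ 2),
        ← ENNReal.rpow_mul]
      norm_num
      rw [mul_comm]
      simp [← Real.norm_eq_abs, ofReal_norm, enorm_eq_nnnorm]
    calc (∫⁻ t, (ENNReal.ofReal |deriv U t| * (w t) ^ ((2:ℝ)⁻¹)) ^ (2:ℝ) ∂ν)
        = ∫⁻ t in Set.Ioc x y, ((w : ℝ → ℝ≥0∞) * fun t => (‖deriv U t‖₊ : ℝ≥0∞) ^ 2) t := by
          rw [hν]; exact lintegral_congr fun t => heq t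
      _ = ∫⁻ t in Set.Ioc x y, (‖deriv U t‖₊ : ℝ≥0∞) ^ 2
            ∂(volume.withDensity (fun t => w t)) := by
          rw [setLIntegral_withDensity_eq_setLIntegral_mul volume hwmeas
            ((hUc.measurable.nnnorm.coe_nnreal_ennreal).pow_const 2) measurableSet_Ioc]
      _ ≤ ∫⁻ t, (‖deriv U t‖₊ : ℝ≥0∞) ^ 2 ∂(volume.withDensity (fun t => w t)) :=
          setLIntegral_le_lintegral _ _
      _ ≤ ∫⁻ t, (‖deriv U t‖₊ : ℝ≥0∞) ^ 2 ∂μ := lintegral_mono' hle le_rfl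
  have hB : (∫⁻ t, ((w t) ^ (-(2:ℝ)⁻¹)) ^ (2:ℝ) ∂ν) = ∫⁻ t in Set.Ioc x y, (w t)⁻¹ := by
    refine lintegral_congr fun t => ?_
    rw [← ENNReal.rpow_mul]
    norm_num
    exact ENNReal.rpow_neg_one _
  have hsq : ∀ X : ℝ≥0∞, (X ^ ((2:ℝ)⁻¹)) ^ (2:ℕ) = X := by
    intro X
    rw [← ENNReal.rpow_natCast _ 2, ← ENNReal.rpow_mul]
    norm_num
  calc ENNReal.ofReal ((U y - U x) ^ 2)
      = ENNReal.ofReal |U y - U x| ^ 2 := by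
        rw [← sq_abs, ENNReal.ofReal_pow (abs_nonneg _)]
    _ ≤ (∫⁻ t, ENNReal.ofReal |deriv U t| ∂ν) ^ 2 := by
        refine pow_le_pow_left' ?_ 2
        rw [← hlin]
        exact ENNReal.ofReal_le_ofReal habs
    _ ≤ ((∫⁻ t, (ENNReal.ofReal |deriv U t| * (w t) ^ ((2:ℝ)⁻¹)) ^ (2:ℝ) ∂ν) ^ ((2:ℝ)⁻¹) *
        (∫⁻ t, ((w t) ^ (-(2:ℝ)⁻¹)) ^ (2:ℝ) ∂ν) ^ ((2:ℝ)⁻¹)) ^ 2 := pow_le_pow_left' hCS 2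
    _ = (∫⁻ t, (ENNReal.ofReal |deriv U t| * (w t) ^ ((2:ℝ)⁻¹)) ^ (2:ℝ) ∂ν) *
        (∫⁻ t, ((w t) ^ (-(2:ℝ)⁻¹)) ^ (2:ℝ) ∂ν) := by
        rw [mul_pow, hsq, hsq]
    _ ≤ (∫⁻ t, (‖deriv U t‖₊ : ℝ≥0∞) ^ 2 ∂μ) * ∫⁻ t in Set.Ioc x y, (w t)⁻¹ :=
        mul_le_mul' hA hB.le

lemma osc_limit (μ : Measure ℝ) (f : ℝ → ℝ) (hf : Measurable f)
    (hle : volume.withDensity (fun x => ENNReal.ofReal (f x)) ≤ μ)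
    (u v : ℝ → ℝ) (hu : MemLp u 2 μ) (hv : MemLp v 2 μ)
    (hgrad : IsGradient μ u v) :
    ∃ S : Set ℝ, MeasurableSet S ∧ μ Sᶜ = 0 ∧ ∀ x ∈ S, ∀ y ∈ S, x ≤ y →
      (∫⁻ t in Set.Ioo x y, (ENNReal.ofReal (f t))⁻¹) ≠ ⊤ →
      ENNReal.ofReal ((u y - u x) ^ 2) ≤
        (eLpNorm v 2 μ ^ 2) * ∫⁻ t in Set.Ioo x y, (ENNReal.ofReal (f t))⁻¹ := by
  obtain ⟨Us, hUc, hUu, hUv⟩ := hgrad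
  have htm : TendstoInMeasure μ Us atTop u := by
    refine tendstoInMeasure_of_tendsto_eLpNorm (p := 2) two_ne_zero
      (fun n => (hUc n).continuous.aestronglyMeasurable) hu.1 ?_
    exact hUu
  obtain ⟨ψ, hψmono, hψae⟩ := htm.exists_seq_tendsto_ae
  set T : Set ℝ := {x | Tendsto (fun i => Us (ψ i) x) atTop (𝓝 (u x))} with hT
  refine ⟨(toMeasurable μ Tᶜ)ᶜ, (measurableSet_toMeasurable μ Tᶜ).compl, ?_, ?_⟩
  · rw [compl_compl, measure_toMeasurable, hT, compl_setOf]
    exact ae_iff.mp hψae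
  · intro x hx y hy hxy hfin
    have hxT : x ∈ T := by
      by_contra hc
      exact hx (subset_toMeasurable μ Tᶜ hc)
    have hyT : y ∈ T := by
      by_contra hc
      exact hy (subset_toMeasurable μ Tᶜ hc)
    set G := ∫⁻ t in Set.Ioo x y, (ENNReal.ofReal (f t))⁻¹ with hG
    have hεv : Tendsto (fun j => eLpNorm (fun t => deriv (Us (ψ j)) t - v t) 2 μ)
        atTop (𝓝 0) := hUv.comp hψmono.tendsto_atTop
    have hbound : ∀ j, ENNReal.ofReal ((Us (ψ j) y - Us (ψ j) x) ^ 2) ≤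
        ((eLpNorm (fun t => deriv (Us (ψ j)) t - v t) 2 μ + eLpNorm v 2 μ) ^ 2) * G := by
      intro j
      refine le_trans (smooth_osc μ f hf hle (Us (ψ j)) (hUc _) x y hxy hfin) ?_
      refine mul_le_mul' ?_ le_rfl
      rw [← sq_eLpNorm_two]
      refine pow_le_pow_left' ?_ 2
      have hd : deriv (Us (ψ j)) = fun t => (deriv (Us (ψ j)) t - v t) + v t := by
        funext t; ring
      nth_rewrite 1 [hd]
      exact eLpNorm_add_le
        ((((hUc (ψ j)).continuous_deriv le_rfl).aestronglyMeasurable).sub hv.1) hv.1 one_le_two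
    have hL : Tendsto (fun j => ENNReal.ofReal ((Us (ψ j) y - Us (ψ j) x) ^ 2)) atTop
        (𝓝 (ENNReal.ofReal ((u y - u x) ^ 2))) := by
      exact (ENNReal.continuous_ofReal.tendsto _).comp
        (((continuous_pow 2).tendsto _).comp (hyT.sub hxT))
    have hR : Tendsto (fun j =>
        ((eLpNorm (fun t => deriv (Us (ψ j)) t - v t) 2 μ + eLpNorm v 2 μ) ^ 2) * G) atTop
        (𝓝 ((eLpNorm v 2 μ ^ 2) * G)) := by
      have h1 : Tendsto (fun j => eLpNorm (fun t => deriv (Us (ψ j)) t - v t) 2 μ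
          + eLpNorm v 2 μ) atTop (𝓝 (eLpNorm v 2 μ)) := by
        have := Tendsto.add hεv (tendsto_const_nhds (x := eLpNorm v 2 μ))
        simpa using this
      exact ENNReal.Tendsto.mul_const (ENNReal.Tendsto.pow h1) (Or.inr hfin)
    exact le_of_tendsto_of_tendsto' hL hR hbound

lemma ofReal_sq_eq (r : ℝ) : ENNReal.ofReal (r ^ 2) = (‖r‖₊ : ℝ≥0∞) ^ 2 := by
  rw [← sq_abs, ENNReal.ofReal_pow (abs_nonneg _), ← Real.norm_eq_abs,
    ofReal_norm, enorm_eq_nnnorm]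

/-- Compactness in `H¹_μ(I)`: a bounded sequence in `H¹_μ(I)` admits a subsequence
converging pointwise `μ`-a.e. on `V = I \ (M ∪ A)`, i.e. at `μ`-a.e. point where the
tangent space to `μ` is `ℝ`. -/
theorem compactness_H1mu
    (a b : ℝ) (hab : a < b) (I : Set ℝ) (hI : I = Set.Ioo a b)
    (μ : Measure ℝ) [IsFiniteMeasure μ] (hμI : μ Iᶜ = 0)
    (f : ℝ → ℝ) (hfmeas : Measurable f) (hfnonneg : 0 ≤ f)
    (μs : Measure ℝ) (hsing : μs ⟂ₘ volume)
    (hdecomp : μ = volume.withDensity (fun x => ENNReal.ofReal (f x)) + μs)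
    (A : Set ℝ) (hAmeas : MeasurableSet A) (hAI : A ⊆ I)
    (hAnull : volume A = 0) (hconc : μs Aᶜ = 0)
    (M : Set ℝ)
    (hM : M = {x ∈ closure I | ∀ ε > 0,
      ∫⁻ t in I ∩ Set.Ioo (x - ε) (x + ε), (ENNReal.ofReal (f t))⁻¹ = ⊤})
    (V : Set ℝ) (hV : V = I \ (M ∪ A))
    (un vn : ℕ → ℝ → ℝ)
    (hmem : ∀ n, MemLp (un n) 2 μ ∧ MemLp (vn n) 2 μ ∧ IsGradient μ (un n) (vn n))
    (hbound : ∃ C : ℝ≥0∞, C ≠ ⊤ ∧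
      ∀ n, eLpNorm (un n) 2 μ ^ 2 + eLpNorm (vn n) 2 μ ^ 2 ≤ C) :
    ∃ φ : ℕ → ℕ, StrictMono φ ∧ ∃ u : ℝ → ℝ,
      ∀ᵐ x ∂(μ.restrict V), Tendsto (fun k => un (φ k) x) atTop (nhds (u x)) := by
  obtain ⟨C, hCtop, hC⟩ := hbound
  have hle : volume.withDensity (fun x => ENNReal.ofReal (f x)) ≤ μ := by
    rw [hdecomp]; exact Measure.le_add_right le_rfl
  set ρ : Measure ℝ := volume.withDensity (fun t => (ENNReal.ofReal (f t))⁻¹) with hρdef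
  have hρ : ∀ s : Set ℝ, MeasurableSet s → ρ s = ∫⁻ t in s, (ENNReal.ofReal (f t))⁻¹ :=
    fun s hs => withDensity_apply _ hs
  have hImeas : MeasurableSet I := by rw [hI]; exact measurableSet_Ioo
  have hIsub : ∀ {x y : ℝ}, x ∈ I → y ∈ I → Set.Ioo x y ⊆ I := by
    intro x y hx hy
    rw [hI] at hx hy ⊢
    exact Set.Ioo_subset_Ioo hx.1.le hy.2.le
  -- the full-measure sets where the oscillation estimate holds
  have hSn : ∀ n, ∃ S, MeasurableSet S ∧ μ Sᶜ = 0 ∧ ∀ x ∈ S, ∀ y ∈ S, x ≤ y →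
      (∫⁻ t in Set.Ioo x y, (ENNReal.ofReal (f t))⁻¹) ≠ ⊤ →
      ENNReal.ofReal ((un n y - un n x) ^ 2) ≤
        (eLpNorm (vn n) 2 μ ^ 2) * ∫⁻ t in Set.Ioo x y, (ENNReal.ofReal (f t))⁻¹ :=
    fun n => osc_limit μ f hfmeas hle (un n) (vn n) (hmem n).1 (hmem n).2.1 (hmem n).2.2
  choose Sn hSnmeas hSnnull hSnest using hSn
  set S : Set ℝ := ⋂ n, Sn n with hSdef
  have hSmeas : MeasurableSet S := MeasurableSet.iInter hSnmeas
  have hSnull : μ Sᶜ = 0 := by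
    rw [hSdef, Set.compl_iInter]
    exact measure_iUnion_null hSnnull
  -- additivity of ρ along intervals
  have hsing_ρ : ∀ x : ℝ, ρ {x} = 0 := by
    intro x
    exact (withDensity_absolutelyContinuous volume _) (Real.volume_singleton)
  have hadd : ∀ (p : ℝ) (x y : ℝ), p < x → x ≤ y → x ∈ I → y ∈ I →
      ρ (I ∩ Set.Ioo p y) = ρ (I ∩ Set.Ioo p x) + ρ (Set.Ioo x y) := by
    intro p x y hpx hxy hxI hyI
    rcases eq_or_lt_of_le hxy with rfl | hxy'
    · simp
    · have h1 : I ∩ Set.Ioo p y = (I ∩ Set.Ioo p x) ∪ (I ∩ Set.Ico x y) := by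
        rw [← Set.inter_union_distrib_left, Set.Ioo_union_Ico_eq_Ioo hpx hxy]
      have hdisj : Disjoint (I ∩ Set.Ioo p x) (I ∩ Set.Ico x y) := by
        refine Set.disjoint_left.mpr ?_
        rintro t ⟨-, ht1⟩ ⟨-, ht2⟩
        exact absurd ht2.1 (not_le.mpr ht1.2)
      have h2 : ρ (I ∩ Set.Ico x y) = ρ (Set.Ioo x y) := by
        have hins : I ∩ Set.Ico x y = insert x (Set.Ioo x y) := by
          rw [← Set.Ioo_insert_left hxy', Set.inter_insert_of_mem hxI,
            Set.inter_eq_self_of_subset_right (hIsub hxI hyI)]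
        rw [hins]
        refine le_antisymm ?_ (measure_mono (Set.subset_insert _ _))
        rw [Set.insert_eq]
        refine (measure_union_le _ _).trans ?_
        rw [hsing_ρ x, zero_add]
      rw [h1, measure_union hdisj (hImeas.inter measurableSet_Ico), h2]
  -- notation for covering intervals
  set T : ℚ × ℚ → Set ℝ := fun pq => S ∩ (I ∩ Set.Ioo (pq.1 : ℝ) (pq.2 : ℝ)) with hTdef
  set G : ℚ × ℚ → ℝ → ℝ := fun pq t => (ρ (I ∩ Set.Ioo (pq.1 : ℝ) t)).toReal with hGdef
  have hTmeas : ∀ pq, MeasurableSet (T pq) :=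
    fun pq => hSmeas.inter (hImeas.inter measurableSet_Ioo)
  have hvC : ∀ n, eLpNorm (vn n) 2 μ ^ 2 ≤ C := fun n => le_trans le_add_self (hC n)
  have huC : ∀ n, eLpNorm (un n) 2 μ ^ 2 ≤ C := fun n => le_trans le_self_add (hC n)
  -- finiteness of ρ on small intervals
  have hρfin : ∀ pq : ℚ × ℚ, ρ (I ∩ Set.Ioo (pq.1 : ℝ) (pq.2 : ℝ)) ≠ ⊤ →
      ∀ x y, x ∈ T pq → y ∈ T pq → ρ (Set.Ioo x y) ≠ ⊤ := by
    intro pq hfin x y hx hy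
    refine ne_top_of_le_ne_top hfin (measure_mono ?_)
    intro t ht
    exact ⟨hIsub hx.2.1 hy.2.1 ht, Set.Ioo_subset_Ioo hx.2.2.1.le hy.2.2.2.le ht⟩
  -- difference of G along the interval
  have hGdiff : ∀ pq : ℚ × ℚ, ρ (I ∩ Set.Ioo (pq.1 : ℝ) (pq.2 : ℝ)) ≠ ⊤ →
      ∀ x y, x ∈ T pq → y ∈ T pq → x ≤ y →
      G pq y - G pq x = (ρ (Set.Ioo x y)).toReal := by
    intro pq hfin x y hx hy hxy
    have h1 := hadd (pq.1 : ℝ) x y hx.2.2.1 hxy hx.2.1 hy.2.1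
    have h2 : ρ (I ∩ Set.Ioo (pq.1 : ℝ) x) ≠ ⊤ := by
      refine ne_top_of_le_ne_top hfin (measure_mono (Set.inter_subset_inter_right _ ?_))
      exact Set.Ioo_subset_Ioo le_rfl hx.2.2.2.le
    have h3 := hρfin pq hfin x y hx hy
    rw [hGdef]
    simp only
    rw [h1, ENNReal.toReal_add h2 h3]
    ring
  -- key oscillation estimate, ordered version
  have keyo : ∀ pq : ℚ × ℚ, ρ (I ∩ Set.Ioo (pq.1 : ℝ) (pq.2 : ℝ)) ≠ ⊤ →
      ∀ n x y, x ∈ T pq → y ∈ T pq → x ≤ y →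
      (un n y - un n x) ^ 2 ≤ C.toReal * (G pq y - G pq x) := by
    intro pq hfin n x y hx hy hxy
    have hfin' := hρfin pq hfin x y hx hy
    have hiooeq : ∫⁻ t in Set.Ioo x y, (ENNReal.ofReal (f t))⁻¹ = ρ (Set.Ioo x y) :=
      (hρ _ measurableSet_Ioo).symm
    have hS1 : x ∈ Sn n := by
      have := hx.1; rw [hSdef] at this; exact Set.mem_iInter.mp this n
    have hS2 : y ∈ Sn n := by
      have := hy.1; rw [hSdef] at this; exact Set.mem_iInter.mp this n
    have hest := hSnest n x hS1 y hS2 hxy (by rw [hiooeq]; exact hfin')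
    rw [hiooeq] at hest
    have hest2 : ENNReal.ofReal ((un n y - un n x) ^ 2) ≤ C * ρ (Set.Ioo x y) :=
      hest.trans (mul_le_mul' (hvC n) le_rfl)
    have hne : C * ρ (Set.Ioo x y) ≠ ⊤ := ENNReal.mul_ne_top hCtop hfin'
    have := ENNReal.toReal_mono hne hest2
    rw [ENNReal.toReal_ofReal (sq_nonneg _), ENNReal.toReal_mul] at this
    rw [hGdiff pq hfin x y hx hy hxy]
    exact this
  -- unordered version
  have key2 : ∀ pq : ℚ × ℚ, ρ (I ∩ Set.Ioo (pq.1 : ℝ) (pq.2 : ℝ)) ≠ ⊤ →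
      ∀ n x y, x ∈ T pq → y ∈ T pq →
      (un n y - un n x) ^ 2 ≤ C.toReal * |G pq y - G pq x| := by
    intro pq hfin n x y hx hy
    rcases le_total x y with hxy | hxy
    · have h := keyo pq hfin n x y hx hy hxy
      have h0 : 0 ≤ G pq y - G pq x := by
        rw [hGdiff pq hfin x y hx hy hxy]; exact ENNReal.toReal_nonneg
      rwa [abs_of_nonneg h0]
    · have h := keyo pq hfin n y x hy hx hxy
      have h0 : 0 ≤ G pq x - G pq y := by
        rw [hGdiff pq hfin y x hy hx hxy]; exact ENNReal.toReal_nonneg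
      rw [abs_sub_comm, abs_of_nonneg h0]
      have heq : (un n y - un n x) ^ 2 = (un n x - un n y) ^ 2 := by ring
      rwa [heq]
  -- G is bounded on the interval
  have hGbound : ∀ pq : ℚ × ℚ, ρ (I ∩ Set.Ioo (pq.1 : ℝ) (pq.2 : ℝ)) ≠ ⊤ →
      ∀ t, 0 ≤ G pq t ∧ (t ∈ I ∩ Set.Ioo (pq.1 : ℝ) (pq.2 : ℝ) →
        G pq t ≤ (ρ (I ∩ Set.Ioo (pq.1 : ℝ) (pq.2 : ℝ))).toReal) := by
    intro pq hfin t
    constructor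
    · exact ENNReal.toReal_nonneg
    · intro ht
      refine ENNReal.toReal_mono hfin (measure_mono (Set.inter_subset_inter_right _ ?_))
      exact Set.Ioo_subset_Ioo le_rfl ht.2.2.le
  -- positivity of the measure of T pq
  have hμT : ∀ pq : ℚ × ℚ, μ (I ∩ Set.Ioo (pq.1 : ℝ) (pq.2 : ℝ)) ≠ 0 → μ (T pq) ≠ 0 := by
    intro pq hpos
    intro h0
    refine hpos (le_antisymm ?_ zero_le)
    calc μ (I ∩ Set.Ioo (pq.1 : ℝ) (pq.2 : ℝ)) ≤ μ (T pq ∪ Sᶜ) := by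
          refine measure_mono fun t ht => ?_
          by_cases hts : t ∈ S
          · exact Or.inl ⟨hts, ht⟩
          · exact Or.inr hts
      _ ≤ μ (T pq) + μ Sᶜ := measure_union_le _ _
      _ = 0 := by rw [h0, hSnull, add_zero]
  -- a point with controlled value
  have havg : ∀ pq : ℚ × ℚ, μ (I ∩ Set.Ioo (pq.1 : ℝ) (pq.2 : ℝ)) ≠ 0 →
      ∀ n, ∃ z ∈ T pq, (un n z) ^ 2 ≤ ((C + 1) / μ (T pq)).toReal := by
    intro pq hpos n
    by_contra hcon
    push_neg at hcon
    have hμT0 := hμT pq hpos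
    have hμTtop : μ (T pq) ≠ ⊤ := measure_ne_top μ _
    have hdivtop : (C + 1) / μ (T pq) ≠ ⊤ :=
      (ENNReal.div_lt_top (by simp [hCtop]) hμT0).ne
    have hlow : ∀ z ∈ T pq, (C + 1) / μ (T pq) ≤ ENNReal.ofReal ((un n z) ^ 2) := by
      intro z hz
      rw [← ENNReal.ofReal_toReal hdivtop]
      exact ENNReal.ofReal_le_ofReal (hcon z hz).le
    have hchain : C + 1 ≤ C := by
      calc C + 1 = (C + 1) / μ (T pq) * μ (T pq) :=
            (ENNReal.div_mul_cancel hμT0 hμTtop).symm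
        _ = ∫⁻ _ in T pq, (C + 1) / μ (T pq) ∂μ := by
            rw [setLIntegral_const]
        _ ≤ ∫⁻ z in T pq, ENNReal.ofReal ((un n z) ^ 2) ∂μ :=
            setLIntegral_mono' (hTmeas pq) hlow
        _ = ∫⁻ z in T pq, (‖un n z‖₊ : ℝ≥0∞) ^ 2 ∂μ := by
            refine lintegral_congr fun z => ofReal_sq_eq _
        _ ≤ ∫⁻ z, (‖un n z‖₊ : ℝ≥0∞) ^ 2 ∂μ := setLIntegral_le_lintegral _ _
        _ = eLpNorm (un n) 2 μ ^ 2 := (sq_eLpNorm_two μ (un n)).symm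
        _ ≤ C := huC n
    exact absurd hchain (ENNReal.lt_add_right hCtop one_ne_zero).not_ge
  -- uniform bound on T pq
  have hubound : ∀ pq : ℚ × ℚ, ρ (I ∩ Set.Ioo (pq.1 : ℝ) (pq.2 : ℝ)) ≠ ⊤ →
      μ (I ∩ Set.Ioo (pq.1 : ℝ) (pq.2 : ℝ)) ≠ 0 → ∀ n x, x ∈ T pq →
      (un n x) ^ 2 ≤ 2 * ((C + 1) / μ (T pq)).toReal +
        2 * (C.toReal * (ρ (I ∩ Set.Ioo (pq.1 : ℝ) (pq.2 : ℝ))).toReal) := by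
    intro pq hfin hpos n x hx
    obtain ⟨z, hz, hzle⟩ := havg pq hpos n
    have hosc : (un n x - un n z) ^ 2 ≤
        C.toReal * (ρ (I ∩ Set.Ioo (pq.1 : ℝ) (pq.2 : ℝ))).toReal := by
      refine (key2 pq hfin n z x hz hx).trans ?_
      refine mul_le_mul_of_nonneg_left ?_ ENNReal.toReal_nonneg
      have h1 := hGbound pq hfin x
      have h2 := hGbound pq hfin z
      rw [abs_sub_le_iff]
      constructor
      · linarith [h1.2 hx.2, h2.1]
      · linarith [h2.2 hz.2, h1.1]
    nlinarith [sq_nonneg (un n z - (un n x - un n z))]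
  -- covering V by good rational intervals
  have hcover : ∀ x ∈ V, ∃ pq : ℚ × ℚ, ρ (I ∩ Set.Ioo (pq.1 : ℝ) (pq.2 : ℝ)) ≠ ⊤ ∧
      x ∈ Set.Ioo (pq.1 : ℝ) (pq.2 : ℝ) := by
    intro x hx
    rw [hV] at hx
    have hxI : x ∈ I := hx.1
    have hxM : x ∉ M := fun h => hx.2 (Or.inl h)
    rw [hM] at hxM
    simp only [Set.mem_setOf_eq] at hxM
    push_neg at hxM
    obtain ⟨ε, hε, hεne⟩ := hxM (subset_closure hxI)
    rw [← hρ _ (hImeas.inter measurableSet_Ioo)] at hεne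
    obtain ⟨p, hp1, hp2⟩ := exists_rat_btwn (show x - ε < x by linarith)
    obtain ⟨q, hq1, hq2⟩ := exists_rat_btwn (show x < x + ε by linarith)
    refine ⟨(p, q), ?_, ⟨hp2, hq1⟩⟩
    refine ne_top_of_le_ne_top hεne (measure_mono (Set.inter_subset_inter_right _ ?_))
    exact Set.Ioo_subset_Ioo hp1.le hq2.le
  -- dense sequences in T pq
  have hdense : ∀ pq : ℚ × ℚ, μ (I ∩ Set.Ioo (pq.1 : ℝ) (pq.2 : ℝ)) ≠ 0 →
      ∃ d : ℕ → ℝ, (∀ j, d j ∈ T pq) ∧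
        ∀ x ∈ T pq, ∀ δ : ℝ, 0 < δ → ∃ j, |G pq (d j) - G pq x| < δ := by
    intro pq hpos
    have hTne : (T pq).Nonempty := nonempty_of_measure_ne_zero (hμT pq hpos)
    have hsne : Nonempty ↥(G pq '' T pq) := (hTne.image _).to_subtype
    obtain ⟨useq, hdr⟩ := TopologicalSpace.exists_dense_seq ↥(G pq '' T pq)
    have hmems : ∀ j, (useq j : ℝ) ∈ G pq '' T pq := fun j => (useq j).2
    choose e he1 he2 using fun j => hmems j
    refine ⟨e, he1, ?_⟩
    intro x hx δ hδ
    have hxs : G pq x ∈ G pq '' T pq := Set.mem_image_of_mem _ hx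
    obtain ⟨j, hj⟩ := Metric.denseRange_iff.mp hdr ⟨G pq x, hxs⟩ δ hδ
    refine ⟨j, ?_⟩
    rw [Subtype.dist_eq, Real.dist_eq, ← he2 j] at hj
    rw [abs_sub_comm]
    exact hj
  -- choose the dense sequences for good pairs
  classical
  set Good : Set (ℚ × ℚ) := {pq | ρ (I ∩ Set.Ioo (pq.1 : ℝ) (pq.2 : ℝ)) ≠ ⊤ ∧
      μ (I ∩ Set.Ioo (pq.1 : ℝ) (pq.2 : ℝ)) ≠ 0} with hGoodDef
  choose dd hdd1 hdd2 using fun i : ↥Good => hdense i.1 i.2.2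
  set Bnd : ↥Good → ℝ := fun i => Real.sqrt (2 * ((C + 1) / μ (T i.1)).toReal +
      2 * (C.toReal * (ρ (I ∩ Set.Ioo ((i.1.1 : ℝ)) ((i.1.2 : ℝ)))).toReal)) with hBndDef
  have hinK : ∀ (n : ℕ) (z : ↥Good × ℕ),
      un n (dd z.1 z.2) ∈ Set.Icc (-(Bnd z.1)) (Bnd z.1) := by
    intro n z
    have h1 := hubound z.1.1 z.1.2.1 z.1.2.2 n (dd z.1 z.2) (hdd1 z.1 z.2)
    have h2 : |un n (dd z.1 z.2)| ≤ Bnd z.1 := by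
      rw [← Real.sqrt_sq_eq_abs]
      exact Real.sqrt_le_sqrt h1
    exact abs_le.mp h2
  -- compactness of the product of intervals
  have hcpt : IsCompact (Set.univ.pi fun z : ↥Good × ℕ =>
      Set.Icc (-(Bnd z.1)) (Bnd z.1)) := isCompact_univ_pi fun z => isCompact_Icc
  have hFmem : ∀ n, (fun z : ↥Good × ℕ => un n (dd z.1 z.2)) ∈
      Set.univ.pi fun z => Set.Icc (-(Bnd z.1)) (Bnd z.1) := by
    intro n z _
    exact hinK n z
  obtain ⟨L, -, φ, hφmono, hφconv⟩ := hcpt.tendsto_subseq hFmem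
  have hcoord : ∀ (i : ↥Good) (j : ℕ),
      Tendsto (fun k => un (φ k) (dd i j)) atTop (𝓝 (L (i, j))) := by
    intro i j
    exact tendsto_pi_nhds.mp hφconv (i, j)
  -- Cauchy at every point of T pq
  have hcauchy : ∀ i : ↥Good, ∀ x ∈ T i.1,
      ∃ l : ℝ, Tendsto (fun k => un (φ k) x) atTop (𝓝 l) := by
    intro i x hx
    refine cauchySeq_tendsto_of_complete ?_
    rw [Metric.cauchySeq_iff]
    intro ε hε
    have hδ : 0 < (ε / 3) ^ 2 / (C.toReal + 1) := by positivity
    obtain ⟨j, hj⟩ := hdd2 i x hx _ hδ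
    have hstep : ∀ n, |un n x - un n (dd i j)| < ε / 3 := by
      intro n
      have h1 : (un n x - un n (dd i j)) ^ 2 ≤ C.toReal * |G i.1 x - G i.1 (dd i j)| :=
        key2 i.1 i.2.1 n (dd i j) x (hdd1 i j) hx
      have h3 : |G i.1 x - G i.1 (dd i j)| < (ε / 3) ^ 2 / (C.toReal + 1) := by
        rw [abs_sub_comm]
        exact hj
      have h2 : C.toReal * |G i.1 x - G i.1 (dd i j)| < (ε / 3) ^ 2 := by
        calc C.toReal * |G i.1 x - G i.1 (dd i j)|
            ≤ (C.toReal + 1) * |G i.1 x - G i.1 (dd i j)| :=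
              mul_le_mul_of_nonneg_right (by linarith) (abs_nonneg _)
          _ < (C.toReal + 1) * ((ε / 3) ^ 2 / (C.toReal + 1)) :=
              mul_lt_mul_of_pos_left h3 (by positivity)
          _ = (ε / 3) ^ 2 := by field_simp
      have h5 : (un n x - un n (dd i j)) ^ 2 < (ε / 3) ^ 2 := lt_of_le_of_lt h1 h2
      have h6 := Real.sqrt_lt_sqrt (sq_nonneg _) h5
      rwa [Real.sqrt_sq_eq_abs, Real.sqrt_sq (by positivity : (0:ℝ) ≤ ε / 3)] at h6
    have hc := (hcoord i j).cauchySeq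
    rw [Metric.cauchySeq_iff] at hc
    obtain ⟨N, hN⟩ := hc (ε / 3) (by positivity)
    refine ⟨N, ?_⟩
    intro m hm l hl
    have hmid := hN m hm l hl
    rw [Real.dist_eq] at hmid ⊢
    have h1 := hstep (φ m)
    have h2 := hstep (φ l)
    rw [abs_sub_comm] at h2
    calc |un (φ m) x - un (φ l) x|
        ≤ |un (φ m) x - un (φ m) (dd i j)| + |un (φ m) (dd i j) - un (φ l) x| :=
          abs_sub_le _ _ _
      _ ≤ |un (φ m) x - un (φ m) (dd i j)| +
          (|un (φ m) (dd i j) - un (φ l) (dd i j)| + |un (φ l) (dd i j) - un (φ l) x|) :=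
          add_le_add_right (abs_sub_le _ _ _) _
      _ < ε / 3 + (ε / 3 + ε / 3) := by
          refine add_lt_add h1 (add_lt_add hmid h2)
      _ = ε := by ring
  -- definition of the limit function
  refine ⟨φ, hφmono, fun x =>
    if h : ∃ l : ℝ, Tendsto (fun k => un (φ k) x) atTop (𝓝 l) then h.choose else 0, ?_⟩
  have hulim : ∀ x (hx : ∃ l : ℝ, Tendsto (fun k => un (φ k) x) atTop (𝓝 l)),
      Tendsto (fun k => un (φ k) x) atTop
        (𝓝 (if h : ∃ l : ℝ, Tendsto (fun k => un (φ k) x) atTop (𝓝 l)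
          then h.choose else 0)) := by
    intro x hx
    rw [dif_pos hx]
    exact hx.choose_spec
  -- the exceptional null set
  set N2 : Set ℝ := ⋃ pq : ℚ × ℚ, ⋃ (_ : μ (I ∩ Set.Ioo (pq.1 : ℝ) (pq.2 : ℝ)) = 0),
      I ∩ Set.Ioo (pq.1 : ℝ) (pq.2 : ℝ) with hN2Def
  have hN2null : μ N2 = 0 :=
    measure_iUnion_null fun pq => measure_iUnion_null fun h => h
  have hN2meas : MeasurableSet N2 :=
    MeasurableSet.iUnion fun pq => MeasurableSet.iUnion fun _ =>
      hImeas.inter measurableSet_Ioo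
  set Ucov : Set ℝ := ⋃ pq : ℚ × ℚ, ⋃ (_ : ρ (I ∩ Set.Ioo (pq.1 : ℝ) (pq.2 : ℝ)) ≠ ⊤),
      Set.Ioo (pq.1 : ℝ) (pq.2 : ℝ) ∩ I with hUcovDef
  have hUcovmeas : MeasurableSet Ucov :=
    MeasurableSet.iUnion fun pq => MeasurableSet.iUnion fun _ =>
      measurableSet_Ioo.inter hImeas
  -- the main pointwise claim
  have hclaim : ∀ x, x ∉ Sᶜ ∪ N2 → x ∈ Ucov →
      Tendsto (fun k => un (φ k) x) atTop
        (𝓝 (if h : ∃ l : ℝ, Tendsto (fun k => un (φ k) x) atTop (𝓝 l)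
          then h.choose else 0)) := by
    intro x hxN hxU
    rw [hUcovDef] at hxU
    simp only [Set.mem_iUnion] at hxU
    obtain ⟨pq, hpqfin, hxmem⟩ := hxU
    by_cases hz : μ (I ∩ Set.Ioo (pq.1 : ℝ) (pq.2 : ℝ)) = 0
    · refine absurd (Or.inr ?_) hxN
      rw [hN2Def]
      simp only [Set.mem_iUnion]
      exact ⟨pq, hz, ⟨hxmem.2, hxmem.1⟩⟩
    · have hxS : x ∈ S := by
        by_contra hxS
        exact hxN (Or.inl hxS)
      have hxT : x ∈ T pq := ⟨hxS, hxmem.2, hxmem.1⟩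
      exact hulim x (hcauchy ⟨pq, hpqfin, hz⟩ x hxT)
  -- conclude almost everywhere
  have hNmeas : MeasurableSet (Sᶜ ∪ N2) := hSmeas.compl.union hN2meas
  have h1 : ∀ᵐ x ∂μ.restrict V, x ∉ Sᶜ ∪ N2 := by
    refine measure_eq_zero_iff_ae_notMem.mp ?_
    rw [Measure.restrict_apply hNmeas]
    refine measure_mono_null Set.inter_subset_left ?_
    exact measure_union_null hSnull hN2null
  have h2 : ∀ᵐ x ∂μ.restrict V, x ∈ Ucov := by
    have h0 : μ.restrict V Ucovᶜ = 0 := by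
      rw [Measure.restrict_apply hUcovmeas.compl]
      have hempty : Ucovᶜ ∩ V = ∅ := by
        rw [Set.eq_empty_iff_forall_notMem]
        rintro x ⟨hxc, hxV⟩
        obtain ⟨pq, hfin, hmem2⟩ := hcover x hxV
        have hxI : x ∈ I := by rw [hV] at hxV; exact hxV.1
        refine hxc ?_
        rw [hUcovDef]
        simp only [Set.mem_iUnion]
        exact ⟨pq, hfin, ⟨hmem2, hxI⟩⟩
      rw [hempty]
      exact measure_empty
    have := measure_eq_zero_iff_ae_notMem.mp h0
    filter_upwards [this] with x hx
    simpa using hx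
  filter_upwards [h1, h2] with x hx1 hx2
  exact hclaim x hx1 hx2
end

section
/- Let g : (0,1) → (0,∞) be measurable with ∫₀¹ g(t) dt < ∞ and such that ∫_J dt/g(t) = +∞ for every nonempty open subinterval J ⊆ (0,1). Let Ω = (0,1)² and let μ be the measure on Ω with density f(x,y) = g(x) with respect to 𝓛². Then there exists a sequence (u_n) of continuously differentiable functions on Ω such that u_n → π₁ in L²(μ) and ∇u_n → 0 in L²(μ; ℝ²), where π₁(x,y) = x. In particular the zero vector field is a μ-gradient of π₁, so the tangent space to μ is not ℝ² on any set of positive μ-measure. -/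
open MeasureTheory Filter Set
open scoped ENNReal

private lemma clamp_dist (M y c : ℝ) (hc1 : 0 ≤ c) (hc2 : c ≤ M) :
    |min (max y 0) M - c| ≤ |y - c| := by
  rcases le_total y 0 with hy | hy
  · rw [max_eq_right hy, min_eq_left (hc1.trans hc2),
      abs_of_nonpos (by linarith), abs_of_nonpos (by linarith)]
    linarith
  · rw [max_eq_left hy]
    rcases le_total y M with hy' | hy'
    · rw [min_eq_left hy']
    · rw [min_eq_right hy', abs_of_nonneg (by linarith), abs_of_nonneg (by linarith)]
      linarith

private lemma iSup_min_natCast (x : ℝ≥0∞) : ⨆ n : ℕ, min x (n : ℝ≥0∞) = x := by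
  refine le_antisymm (iSup_le fun n => min_le_left _ _) ?_
  rcases eq_or_ne x ⊤ with hx | hx
  · subst hx
    calc (⊤:ℝ≥0∞) = ⨆ n : ℕ, (n : ℝ≥0∞) := ENNReal.iSup_natCast.symm
    _ ≤ ⨆ n : ℕ, min ⊤ (n:ℝ≥0∞) := by simp
  · obtain ⟨n, hn⟩ := ENNReal.exists_nat_gt hx
    exact le_iSup_of_le n (le_min le_rfl hn.le)

private lemma ofReal_min' (x y : ℝ) :
    ENNReal.ofReal (min x y) = min (ENNReal.ofReal x) (ENNReal.ofReal y) := by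
  rcases le_total x y with h | h
  · rw [min_eq_left h, min_eq_left (ENNReal.ofReal_le_ofReal h)]
  · rw [min_eq_right h, min_eq_right (ENNReal.ofReal_le_ofReal h)]

private lemma rpow_two' (x : ℝ≥0∞) : x ^ (2:ℝ) = x ^ (2:ℕ) := by
  rw [← ENNReal.rpow_natCast]; norm_num

set_option maxHeartbeats 1000000 in
private lemma key_interval (g : ℝ → ℝ) (hgmeas : Measurable g)
    (hgpos : ∀ t ∈ Set.Ioo (0:ℝ) 1, 0 < g t)
    (hgint : ∫⁻ t in Set.Ioo (0:ℝ) 1, ENNReal.ofReal (g t) ≠ ⊤)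
    (hginv : ∀ a b : ℝ, 0 ≤ a → a < b → b ≤ 1 →
      ∫⁻ t in Set.Ioo a b, (ENNReal.ofReal (g t))⁻¹ = ⊤)
    {a b : ℝ} (ha : 0 ≤ a) (hab : a < b) (hb : b ≤ 1) {ε : ℝ} (hε : 0 < ε) :
    ∃ φ : ℝ → ℝ, Continuous φ ∧ (∀ x, 0 ≤ φ x) ∧ (∀ x ∉ Set.Ioo a b, φ x = 0) ∧
      (∫ x in a..b, φ x) = b - a ∧
      ∫⁻ x in Set.Ioo a b, ENNReal.ofReal (φ x ^ 2 * g x) ≤ ENNReal.ofReal ε := by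
  have hsub : Set.Ioo a b ⊆ Set.Ioo (0:ℝ) 1 := Set.Ioo_subset_Ioo ha hb
  have hpos : ∀ t ∈ Set.Ioo a b, 0 < g t := fun t ht => hgpos t (hsub ht)
  set K : ℝ := max 4 (16 / ε) with hK
  have hK4 : (4:ℝ) ≤ K := le_max_left _ _
  have hKε : 16 / ε ≤ K := le_max_right _ _
  have hK0 : (0:ℝ) < K := by linarith
  -- Step 1: find a truncation level M
  have hsup : (⨆ M : ℕ, ∫⁻ t in Set.Ioo a b, min ((ENNReal.ofReal (g t))⁻¹) M) = ⊤ := by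
    rw [← lintegral_iSup (f := fun M t => min ((ENNReal.ofReal (g t))⁻¹) (M:ℝ≥0∞)) (fun M => (hgmeas.ennreal_ofReal.inv).min measurable_const)
      (fun M M' h t => min_le_min le_rfl (by exact_mod_cast h))]
    simp only [iSup_min_natCast]
    exact hginv a b ha hab hb
  have h1 : ENNReal.ofReal K < ⨆ M : ℕ, ∫⁻ t in Set.Ioo a b, min ((ENNReal.ofReal (g t))⁻¹) M := by
    rw [hsup]; exact ENNReal.ofReal_lt_top
  obtain ⟨M0, hM0⟩ := lt_iSup_iff.mp h1
  set M : ℕ := M0 + 1 with hMdef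
  have hM0le : (∫⁻ t in Set.Ioo a b, min ((ENNReal.ofReal (g t))⁻¹) M0)
      ≤ ∫⁻ t in Set.Ioo a b, min ((ENNReal.ofReal (g t))⁻¹) M :=
    lintegral_mono fun t => min_le_min le_rfl (by exact_mod_cast Nat.le_succ M0)
  set Mr : ℝ := (M : ℝ) with hMr
  have hMr1 : (1:ℝ) ≤ Mr := by
    rw [hMr, hMdef]; push_cast; linarith [Nat.cast_nonneg (α := ℝ) M0]
  have hMr0 : (0:ℝ) < Mr := by linarith
  set h : ℝ → ℝ := fun t => max (min (g t)⁻¹ Mr) 0 with hh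
  have hhmeas : Measurable h := (hgmeas.inv.min measurable_const).max measurable_const
  have hh0 : ∀ t, 0 ≤ h t := fun t => le_max_right _ _
  have hhM : ∀ t, h t ≤ Mr := fun t => max_le (min_le_right _ _) (by linarith)
  have hheq : ∀ t ∈ Set.Ioo a b, h t = min (g t)⁻¹ Mr := fun t ht =>
    max_eq_left (le_min (inv_nonneg.mpr (hpos t ht).le) (by linarith))
  have hofh : ∀ t ∈ Set.Ioo a b,
      ENNReal.ofReal (h t) = min ((ENNReal.ofReal (g t))⁻¹) (M:ℝ≥0∞) := by
    intro t ht
    rw [hheq t ht, ofReal_min', ENNReal.ofReal_inv_of_pos (hpos t ht), hMr,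
      ENNReal.ofReal_natCast]
  set S : ℝ≥0∞ := ∫⁻ t in Set.Ioo a b, ENNReal.ofReal (h t) with hSdef
  have hSK : ENNReal.ofReal K < S := by
    refine lt_of_lt_of_le (hM0.trans_le hM0le) (le_of_eq ?_)
    exact (setLIntegral_congr_fun_ae measurableSet_Ioo
      (ae_of_all _ fun t ht => (hofh t ht))).symm
  -- pointwise: h^2 g ≤ h
  have hS2 : (∫⁻ t in Set.Ioo a b, ENNReal.ofReal (h t ^ 2 * g t)) ≤ S := by
    refine setLIntegral_mono' measurableSet_Ioo fun t ht => ENNReal.ofReal_le_ofReal ?_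
    have hgt := hpos t ht
    have h1t : h t * g t ≤ 1 := by
      have : h t ≤ (g t)⁻¹ := by rw [hheq t ht]; exact min_le_left _ _
      calc h t * g t ≤ (g t)⁻¹ * g t := by nlinarith
      _ = 1 := inv_mul_cancel₀ hgt.ne'
    calc h t ^ 2 * g t = h t * (h t * g t) := by ring
    _ ≤ h t * 1 := by nlinarith [hh0 t]
    _ = h t := mul_one _
  -- the auxiliary finite measure ν
  set ν : Measure ℝ :=
    (volume.restrict (Set.Ioo a b)).withDensity (fun t => 1 + ENNReal.ofReal (g t)) with hν
  have hνuniv : ν Set.univ ≠ ⊤ := by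
    rw [hν, withDensity_apply _ MeasurableSet.univ, Measure.restrict_univ,
      lintegral_add_left measurable_const]
    refine ENNReal.add_ne_top.mpr ⟨?_, ?_⟩
    · simp [Real.volume_Ioo]
    · exact ne_top_of_le_ne_top hgint (lintegral_mono_set hsub)
  have hfinν : IsFiniteMeasure ν := ⟨lt_top_iff_ne_top.mpr hνuniv⟩
  have hmem : MemLp h 2 ν := by
    refine MemLp.mono_exponent (q := ⊤) ?_ le_top
    refine memLp_top_of_bound hhmeas.aestronglyMeasurable Mr (ae_of_all _ fun t => ?_)
    rw [Real.norm_eq_abs, abs_of_nonneg (hh0 t)]; exact hhM t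
  obtain ⟨htld, -, hdist, hcont, -⟩ :=
    hmem.exists_hasCompactSupport_eLpNorm_sub_le (ENNReal.ofNat_ne_top) (ε := 1) one_ne_zero
  set φ₁ : ℝ → ℝ := fun x => min (max (htld x) 0) Mr with hφ₁def
  have hφ₁c : Continuous φ₁ := (hcont.max continuous_const).min continuous_const
  have hφ₁0 : ∀ x, 0 ≤ φ₁ x := fun x => le_min (le_max_right _ _) (by linarith)
  have hφ₁M : ∀ x, φ₁ x ≤ Mr := fun x => min_le_right _ _
  have hdiff : eLpNorm (fun t => φ₁ t - h t) 2 ν ≤ 1 := by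
    refine le_trans (eLpNorm_mono fun t => ?_) hdist
    simp only [Pi.sub_apply, Real.norm_eq_abs]
    rw [abs_sub_comm (h t)]
    exact clamp_dist Mr (htld t) (h t) (hh0 t) (hhM t)
  -- measures with density g and Lebesgue, both below ν
  set mg : Measure ℝ :=
    (volume.restrict (Set.Ioo a b)).withDensity (fun t => ENNReal.ofReal (g t)) with hmg
  have hle_g : mg ≤ ν := withDensity_mono (ae_of_all _ fun t => le_add_self)
  have hle_L : volume.restrict (Set.Ioo a b) ≤ ν := by
    have h2 : (volume.restrict (Set.Ioo a b)).withDensity 1 ≤ ν :=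
      withDensity_mono (ae_of_all _ fun t => by simp)
    simpa [withDensity_one] using h2
  have haesm : AEStronglyMeasurable (fun t => φ₁ t - h t) (volume.restrict (Set.Ioo a b)) :=
    (hφ₁c.measurable.sub hhmeas).aestronglyMeasurable
  -- L¹ bound on the Lebesgue distance
  have hA1 : (∫⁻ t in Set.Ioo a b, ENNReal.ofReal |φ₁ t - h t|) ≤ 1 := by
    have e1 : (∫⁻ t in Set.Ioo a b, ENNReal.ofReal |φ₁ t - h t|)
        = eLpNorm (fun t => φ₁ t - h t) 1 (volume.restrict (Set.Ioo a b)) := by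
      rw [eLpNorm_one_eq_lintegral_enorm]
      exact lintegral_congr fun t => (Real.enorm_eq_ofReal_abs _).symm
    rw [e1]
    have hm : (volume.restrict (Set.Ioo a b)) Set.univ
        ^ (1/(1:ℝ≥0∞).toReal - 1/(2:ℝ≥0∞).toReal) ≤ 1 := by
      apply ENNReal.rpow_le_one
      · rw [Measure.restrict_apply_univ, Real.volume_Ioo]
        exact ENNReal.ofReal_le_one.mpr (by linarith)
      · norm_num
    calc eLpNorm (fun t => φ₁ t - h t) 1 (volume.restrict (Set.Ioo a b))
        ≤ eLpNorm (fun t => φ₁ t - h t) 2 (volume.restrict (Set.Ioo a b))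
          * (volume.restrict (Set.Ioo a b)) Set.univ ^ (1/(1:ℝ≥0∞).toReal - 1/(2:ℝ≥0∞).toReal) :=
          eLpNorm_le_eLpNorm_mul_rpow_measure_univ one_le_two haesm
      _ ≤ 1 * 1 :=
          mul_le_mul' (le_trans (eLpNorm_mono_measure _ hle_L) hdiff) hm
      _ = 1 := one_mul _
  -- cutoff function
  set δ : ℝ := min ((b - a)/2) (1/(2*Mr)) with hδdef
  have hδ0 : (0:ℝ) < δ := lt_min (by linarith) (by positivity)
  have hδM : 2 * Mr * δ ≤ 1 := by
    have h1 : δ ≤ 1/(2*Mr) := min_le_right _ _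
    calc 2 * Mr * δ ≤ 2 * Mr * (1/(2*Mr)) := by nlinarith
    _ = 1 := by field_simp
  set ψ : ℝ → ℝ := fun x => max 0 (min 1 (min ((x-a)/δ) ((b-x)/δ))) with hψdef
  have hψc : Continuous ψ :=
    continuous_const.max (continuous_const.min
      (((continuous_id.sub continuous_const).div_const δ).min
        ((continuous_const.sub continuous_id).div_const δ)))
  have hψ0 : ∀ x, 0 ≤ ψ x := fun x => le_max_left _ _
  have hψle1 : ∀ x, ψ x ≤ 1 := fun x => max_le zero_le_one (min_le_left _ _)
  have hψout : ∀ x ∉ Set.Ioo a b, ψ x = 0 := by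
    intro x hx
    have hx' : ¬(a < x ∧ x < b) := hx
    have hmle : min 1 (min ((x-a)/δ) ((b-x)/δ)) ≤ 0 := by
      rcases not_and_or.mp hx' with h1 | h2
      · refine le_trans (min_le_right _ _) (le_trans (min_le_left _ _) ?_)
        exact div_nonpos_iff.mpr (Or.inr ⟨by push_neg at h1; linarith, hδ0.le⟩)
      · refine le_trans (min_le_right _ _) (le_trans (min_le_right _ _) ?_)
        exact div_nonpos_iff.mpr (Or.inr ⟨by push_neg at h2; linarith, hδ0.le⟩)
    exact max_eq_left hmle
  have hψone : ∀ x, a + δ ≤ x → x ≤ b - δ → ψ x = 1 := by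
    intro x h1 h2
    have e1 : (1:ℝ) ≤ (x-a)/δ := (one_le_div hδ0).mpr (by linarith)
    have e2 : (1:ℝ) ≤ (b-x)/δ := (one_le_div hδ0).mpr (by linarith)
    rw [hψdef]
    simp only
    rw [min_eq_left (le_min e1 e2), max_eq_right zero_le_one]
  set φ₀ : ℝ → ℝ := fun x => φ₁ x * ψ x with hφ₀def
  have hφ₀c : Continuous φ₀ := hφ₁c.mul hψc
  have hφ₀0 : ∀ x, 0 ≤ φ₀ x := fun x => mul_nonneg (hφ₁0 x) (hψ0 x)
  have hφ₀M : ∀ x, φ₀ x ≤ Mr := fun x =>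
    calc φ₁ x * ψ x ≤ φ₁ x * 1 := by nlinarith [hφ₁0 x, hψle1 x]
    _ ≤ Mr := by rw [mul_one]; exact hφ₁M x
  have hφ₀out : ∀ x ∉ Set.Ioo a b, φ₀ x = 0 := fun x hx => by
    rw [hφ₀def]; simp only; rw [hψout x hx, mul_zero]
  set T : ℝ≥0∞ := ∫⁻ t in Set.Ioo a b, ENNReal.ofReal (φ₀ t) with hTdef
  have hTtop : T ≠ ⊤ := by
    refine ne_top_of_le_ne_top (b := ENNReal.ofReal Mr * volume (Set.Ioo a b)) ?_ ?_
    · exact ENNReal.mul_ne_top ENNReal.ofReal_ne_top (by simp [Real.volume_Ioo])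
    · calc T ≤ ∫⁻ _ in Set.Ioo a b, ENNReal.ofReal Mr :=
          setLIntegral_mono' measurableSet_Ioo fun t _ => ENNReal.ofReal_le_ofReal (hφ₀M t)
      _ = ENNReal.ofReal Mr * volume (Set.Ioo a b) := setLIntegral_const _ _
  -- S ≤ T + 2
  set bad : Set ℝ := Set.Ioo a (a+δ) ∪ Set.Ioo (b-δ) b with hbaddef
  have hbadm : MeasurableSet bad := measurableSet_Ioo.union measurableSet_Ioo
  have hptwise : ∀ t ∈ Set.Ioo a b, ENNReal.ofReal (h t) ≤
      ENNReal.ofReal (φ₀ t) + ENNReal.ofReal |φ₁ t - h t|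
        + ENNReal.ofReal Mr * bad.indicator (fun _ => (1:ℝ≥0∞)) t := by
    intro t ht
    by_cases hmem2 : a + δ ≤ t ∧ t ≤ b - δ
    · have hφeq : φ₀ t = φ₁ t := by
        rw [hφ₀def]; simp only; rw [hψone t hmem2.1 hmem2.2, mul_one]
      calc ENNReal.ofReal (h t) ≤ ENNReal.ofReal (φ₀ t + |φ₁ t - h t|) := by
            refine ENNReal.ofReal_le_ofReal ?_
            rw [hφeq]
            rcases abs_cases (φ₁ t - h t) with ⟨he, _⟩ | ⟨he, _⟩ <;> linarith
      _ ≤ ENNReal.ofReal (φ₀ t) + ENNReal.ofReal |φ₁ t - h t| := ENNReal.ofReal_add_le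
      _ ≤ _ := le_self_add
    · have htbad : t ∈ bad := by
        rcases not_and_or.mp hmem2 with h1 | h2
        · exact Or.inl ⟨ht.1, by push_neg at h1; linarith⟩
        · exact Or.inr ⟨by push_neg at h2; linarith, ht.2⟩
      have hind : bad.indicator (fun _ => (1:ℝ≥0∞)) t = 1 := Set.indicator_of_mem htbad _
      rw [hind, mul_one]
      calc ENNReal.ofReal (h t) ≤ ENNReal.ofReal Mr := ENNReal.ofReal_le_ofReal (hhM t)
      _ ≤ _ := le_add_self
  have hST : S ≤ T + 2 := by
    have step1 : S ≤ ∫⁻ t in Set.Ioo a b,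
        (ENNReal.ofReal (φ₀ t) + ENNReal.ofReal |φ₁ t - h t|
          + ENNReal.ofReal Mr * bad.indicator (fun _ => (1:ℝ≥0∞)) t) :=
      setLIntegral_mono' measurableSet_Ioo hptwise
    have hmeasB : Measurable fun t => ENNReal.ofReal |φ₁ t - h t| :=
      (hφ₁c.measurable.sub hhmeas).abs.ennreal_ofReal
    have hmeasC : Measurable fun t : ℝ => ENNReal.ofReal Mr * bad.indicator (fun _ => (1:ℝ≥0∞)) t :=
      (measurable_const.indicator hbadm).const_mul _
    have step2 : (∫⁻ t in Set.Ioo a b,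
        (ENNReal.ofReal (φ₀ t) + ENNReal.ofReal |φ₁ t - h t|
          + ENNReal.ofReal Mr * bad.indicator (fun _ => (1:ℝ≥0∞)) t))
        = T + (∫⁻ t in Set.Ioo a b, ENNReal.ofReal |φ₁ t - h t|)
          + ENNReal.ofReal Mr * (volume.restrict (Set.Ioo a b)) bad := by
      rw [lintegral_add_right _ hmeasC, lintegral_add_right _ hmeasB]
      congr 1
      rw [lintegral_const_mul' _ _ ENNReal.ofReal_ne_top, lintegral_indicator hbadm,
        setLIntegral_one]
    have hC : ENNReal.ofReal Mr * (volume.restrict (Set.Ioo a b)) bad ≤ 1 := by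
      have hb1 : (volume.restrict (Set.Ioo a b)) bad ≤ ENNReal.ofReal δ + ENNReal.ofReal δ := by
        refine le_trans (Measure.le_iff'.mp Measure.restrict_le_self bad) ?_
        refine le_trans (measure_union_le _ _) ?_
        rw [Real.volume_Ioo, Real.volume_Ioo]
        gcongr <;> simp
      calc ENNReal.ofReal Mr * (volume.restrict (Set.Ioo a b)) bad
          ≤ ENNReal.ofReal Mr * (ENNReal.ofReal δ + ENNReal.ofReal δ) := mul_le_mul' le_rfl hb1
        _ = ENNReal.ofReal (Mr * (δ + δ)) := by
            rw [← ENNReal.ofReal_add hδ0.le hδ0.le, ← ENNReal.ofReal_mul hMr0.le]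
        _ ≤ ENNReal.ofReal 1 := ENNReal.ofReal_le_ofReal (by nlinarith)
        _ = 1 := ENNReal.ofReal_one
    calc S ≤ T + (∫⁻ t in Set.Ioo a b, ENNReal.ofReal |φ₁ t - h t|)
          + ENNReal.ofReal Mr * (volume.restrict (Set.Ioo a b)) bad := by
          rw [← step2]; exact step1
      _ ≤ T + 1 + 1 := add_le_add (add_le_add le_rfl hA1) hC
      _ = T + 2 := by rw [add_assoc]; norm_num
  have hSttop : S ≠ ⊤ :=
    ne_top_of_le_ne_top (ENNReal.add_ne_top.mpr ⟨hTtop, ENNReal.ofNat_ne_top⟩) hST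
  set Sr : ℝ := S.toReal with hSr
  set Tr : ℝ := T.toReal with hTr
  have hSrK : K < Sr := (ENNReal.ofReal_lt_iff_lt_toReal hK0.le hSttop).mp hSK
  have hSr0 : (0:ℝ) < Sr := by linarith
  have hTrS : Sr ≤ Tr + 2 := by
    have h2 := ENNReal.toReal_mono (ENNReal.add_ne_top.mpr ⟨hTtop, ENNReal.ofNat_ne_top⟩) hST
    rwa [ENNReal.toReal_add hTtop ENNReal.ofNat_ne_top, ENNReal.toReal_ofNat] at h2
  have hTr0 : (0:ℝ) < Tr := by linarith
  -- squared L² norms with respect to the weighted measure mg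
  have sqform : ∀ f : ℝ → ℝ, Measurable f → (∀ x, 0 ≤ f x) →
      eLpNorm f 2 mg = (∫⁻ t in Set.Ioo a b, ENNReal.ofReal (f t ^ 2 * g t)) ^ ((1:ℝ)/2) := by
    intro f hfm hf0
    have step : (∫⁻ t, (‖f t‖₊ : ℝ≥0∞) ^ (2:ℝ) ∂mg)
        = ∫⁻ t in Set.Ioo a b, ENNReal.ofReal (f t ^ 2 * g t) := by
      simp_rw [rpow_two']
      rw [hmg, lintegral_withDensity_eq_lintegral_mul _ hgmeas.ennreal_ofReal
        (hfm.nnnorm.coe_nnreal_ennreal.pow_const 2)]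
      refine setLIntegral_congr_fun_ae measurableSet_Ioo (ae_of_all _ fun t ht => ?_)
      simp only [Pi.mul_apply]
      rw [← enorm_eq_nnnorm, Real.enorm_eq_ofReal (hf0 t), ← ENNReal.ofReal_pow (hf0 t), mul_comm,
        ← ENNReal.ofReal_mul (by positivity)]
    rw [eLpNorm_eq_lintegral_rpow_enorm_toReal two_ne_zero ENNReal.ofNat_ne_top]
    simp only [ENNReal.toReal_ofNat, enorm_eq_nnnorm]
    rw [step]
  set N : ℝ≥0∞ := ∫⁻ t in Set.Ioo a b, ENNReal.ofReal (φ₁ t ^ 2 * g t) with hNdef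
  have htri : N ^ ((1:ℝ)/2) ≤ S ^ ((1:ℝ)/2) + 1 := by
    rw [← sqform φ₁ hφ₁c.measurable hφ₁0]
    calc eLpNorm φ₁ 2 mg = eLpNorm ((fun t => h t) + fun t => φ₁ t - h t) 2 mg := by
          congr 1; funext t; simp
      _ ≤ eLpNorm h 2 mg + eLpNorm (fun t => φ₁ t - h t) 2 mg :=
          eLpNorm_add_le hhmeas.aestronglyMeasurable
            (hφ₁c.measurable.sub hhmeas).aestronglyMeasurable one_le_two
      _ ≤ S ^ ((1:ℝ)/2) + 1 := by
          refine add_le_add ?_ (le_trans (eLpNorm_mono_measure _ hle_g) hdiff)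
          rw [sqform h hhmeas hh0]
          exact ENNReal.rpow_le_rpow hS2 (by norm_num)
  have hS1 : (1:ℝ≥0∞) ≤ S := by
    refine le_trans ?_ hSK.le
    rw [← ENNReal.ofReal_one]
    exact ENNReal.ofReal_le_ofReal (by linarith)
  have hN4S : N ≤ 4 * S := by
    have h1S : (1:ℝ≥0∞) ≤ S ^ ((1:ℝ)/2) := by
      calc (1:ℝ≥0∞) = 1 ^ ((1:ℝ)/2) := (ENNReal.one_rpow _).symm
      _ ≤ S ^ ((1:ℝ)/2) := ENNReal.rpow_le_rpow hS1 (by norm_num)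
    have h2 : N ^ ((1:ℝ)/2) ≤ 2 * S ^ ((1:ℝ)/2) := by
      refine le_trans htri ?_
      rw [two_mul]
      exact add_le_add le_rfl h1S
    calc N = (N ^ ((1:ℝ)/2)) ^ (2:ℝ) := by
          rw [← ENNReal.rpow_mul]; norm_num
      _ ≤ (2 * S ^ ((1:ℝ)/2)) ^ (2:ℝ) := ENNReal.rpow_le_rpow h2 (by norm_num)
      _ = 4 * S := by
          rw [ENNReal.mul_rpow_of_nonneg _ _ (by norm_num : (0:ℝ) ≤ 2), ← ENNReal.rpow_mul,
            rpow_two']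
          norm_num
  -- the real-valued integral of φ₀
  have hIr : (∫ t in Set.Ioo a b, φ₀ t) = Tr := by
    rw [hTr, hTdef]
    exact integral_eq_lintegral_of_nonneg_ae (ae_of_all _ hφ₀0) hφ₀c.aestronglyMeasurable
  set c : ℝ := (b - a)/Tr with hcdef
  have hc0 : 0 ≤ c := div_nonneg (by linarith) hTr0.le
  have hba1 : b - a ≤ 1 := by linarith
  refine ⟨fun x => c * φ₀ x, continuous_const.mul hφ₀c,
    fun x => mul_nonneg hc0 (hφ₀0 x), fun x hx => by show c * φ₀ x = 0; rw [hφ₀out x hx, mul_zero], ?_, ?_⟩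
  · rw [intervalIntegral.integral_of_le hab.le, integral_Ioc_eq_integral_Ioo,
      integral_const_mul, hIr, hcdef]
    field_simp
  · have hrw : ∀ x : ℝ, (c * φ₀ x) ^ 2 * g x = c^2 * (φ₀ x ^ 2 * g x) := fun x => by ring
    simp_rw [hrw]
    have hTS2 : Sr ≤ 2 * Tr := by linarith
    have hcs : c * Sr ≤ 2 := by
      rw [hcdef, div_mul_eq_mul_div, div_le_iff₀ hTr0]
      nlinarith
    have h16 : 16 ≤ ε * Sr := by
      have : 16 / ε ≤ Sr := by linarith
      calc (16:ℝ) = ε * (16/ε) := by field_simp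
      _ ≤ ε * Sr := by nlinarith
    have hreal : c^2 * (4 * Sr) ≤ ε := by
      have hsq : (c*Sr)*(c*Sr) ≤ 4 := by
        nlinarith [mul_le_mul hcs hcs (mul_nonneg hc0 hSr0.le) (by norm_num : (0:ℝ) ≤ 2)]
      have hkey : (c^2 * (4 * Sr)) * Sr ≤ ε * Sr := by nlinarith
      exact le_of_mul_le_mul_right hkey hSr0
    calc (∫⁻ x in Set.Ioo a b, ENNReal.ofReal (c^2 * (φ₀ x ^ 2 * g x)))
        = ENNReal.ofReal (c^2) * ∫⁻ x in Set.Ioo a b, ENNReal.ofReal (φ₀ x ^ 2 * g x) := by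
          simp_rw [ENNReal.ofReal_mul (sq_nonneg c)]
          exact lintegral_const_mul' _ _ ENNReal.ofReal_ne_top
      _ ≤ ENNReal.ofReal (c^2) * N := by
          refine mul_le_mul' le_rfl (setLIntegral_mono' measurableSet_Ioo fun x _ => ?_)
          rcases le_or_gt 0 (g x) with hgx | hgx
          · refine ENNReal.ofReal_le_ofReal ?_
            have hψsq : ψ x ^ 2 ≤ 1 := by nlinarith [hψ0 x, hψle1 x]
            have hsq : φ₀ x ^ 2 ≤ φ₁ x ^ 2 := by
              have he : φ₀ x ^ 2 = φ₁ x ^ 2 * ψ x ^ 2 := by simp only [hφ₀def]; ring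
              rw [he]
              nlinarith [sq_nonneg (φ₁ x)]
            exact mul_le_mul_of_nonneg_right hsq hgx
          · rw [ENNReal.ofReal_eq_zero.mpr (by nlinarith [sq_nonneg (φ₀ x)])]
            exact zero_le
      _ ≤ ENNReal.ofReal (c^2) * (4 * S) := mul_le_mul' le_rfl hN4S
      _ = ENNReal.ofReal (c^2 * (4 * Sr)) := by
          rw [← ENNReal.ofReal_toReal hSttop]
          rw [show ((4:ℝ≥0∞)) = ENNReal.ofReal 4 by norm_num]
          rw [← ENNReal.ofReal_mul (by norm_num : (0:ℝ) ≤ 4),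
            ← ENNReal.ofReal_mul (sq_nonneg c)]
      _ ≤ ENNReal.ofReal ε := ENNReal.ofReal_le_ofReal hreal

set_option maxHeartbeats 1000000 in
private lemma stage (g : ℝ → ℝ) (hgmeas : Measurable g)
    (hgpos : ∀ t ∈ Set.Ioo (0:ℝ) 1, 0 < g t)
    (hgint : ∫⁻ t in Set.Ioo (0:ℝ) 1, ENNReal.ofReal (g t) ≠ ⊤)
    (hginv : ∀ a b : ℝ, 0 ≤ a → a < b → b ≤ 1 →
      ∫⁻ t in Set.Ioo a b, (ENNReal.ofReal (g t))⁻¹ = ⊤)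
    (n : ℕ) (hn : 0 < n) :
    ∃ w Φ : ℝ → ℝ, Continuous Φ ∧ (∀ x, HasDerivAt w (Φ x) x) ∧
      (∀ x ∈ Set.Ioo (0:ℝ) 1, |w x - x| ≤ (n:ℝ)⁻¹) ∧
      (∫⁻ x in Set.Ioo (0:ℝ) 1, ENNReal.ofReal (Φ x ^ 2 * g x))
        ≤ ENNReal.ofReal ((n:ℝ)⁻¹^2) := by
  have hn' : (0:ℝ) < n := by exact_mod_cast hn
  have H : ∀ k : ℕ, ∃ φ : ℝ → ℝ, Continuous φ ∧ (∀ x, 0 ≤ φ x) ∧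
      (∀ x ∉ Set.Ioo ((k:ℝ)/n) (((k:ℝ)+1)/n), φ x = 0) ∧
      (k < n → (∫ x in ((k:ℝ)/n)..(((k:ℝ)+1)/n), φ x) = 1/n ∧
        (∫⁻ x in Set.Ioo ((k:ℝ)/n) (((k:ℝ)+1)/n), ENNReal.ofReal (φ x ^ 2 * g x))
          ≤ ENNReal.ofReal ((n:ℝ)⁻¹^2 * (n:ℝ)⁻¹)) := by
    intro k
    by_cases hk : k < n
    · have hk' : ((k:ℝ)+1) ≤ n := by exact_mod_cast Nat.succ_le_of_lt hk
      obtain ⟨φ, h1, h2, h3, h4, h5⟩ := key_interval g hgmeas hgpos hgint hginv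
        (a := (k:ℝ)/n) (b := ((k:ℝ)+1)/n) (by positivity)
        ((div_lt_div_iff_of_pos_right hn').mpr (by linarith))
        ((div_le_one hn').mpr hk') (ε := (n:ℝ)⁻¹^2*(n:ℝ)⁻¹) (by positivity)
      refine ⟨φ, h1, h2, h3, fun _ => ⟨?_, h5⟩⟩
      rw [h4]; field_simp; ring
    · exact ⟨fun _ => 0, continuous_const, fun _ => le_rfl, fun _ _ => rfl,
        fun h => absurd h hk⟩
  choose φ hφc hφ0 hφv hφk using H
  set Φ : ℝ → ℝ := fun x => ∑ k ∈ Finset.range n, φ k x with hΦdef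
  have hΦc : Continuous Φ := continuous_finset_sum _ fun k _ => hφc k
  have hΦ0 : ∀ x, 0 ≤ Φ x := fun x => Finset.sum_nonneg fun k _ => hφ0 k x
  have hdisj : ∀ k m : ℕ, m ≠ k → ∀ x, (k:ℝ)/n ≤ x → x ≤ ((k:ℝ)+1)/n → φ m x = 0 := by
    intro k m hmk x h1 h2
    apply hφv
    intro hx
    rcases lt_or_gt_of_ne hmk with hlt | hgt
    · have hc : ((m:ℝ)+1)/n ≤ (k:ℝ)/n := by
        exact div_le_div_of_nonneg_right (by exact_mod_cast Nat.succ_le_of_lt hlt) hn'.le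
      exact absurd hx.2 (not_lt.mpr (le_trans hc h1))
    · have hc : ((k:ℝ)+1)/n ≤ (m:ℝ)/n := by
        exact div_le_div_of_nonneg_right (by exact_mod_cast Nat.succ_le_of_lt hgt) hn'.le
      exact absurd hx.1 (not_lt.mpr (h2.trans hc))
  have hΦeq : ∀ k, k < n → ∀ x, (k:ℝ)/n < x → x < ((k:ℝ)+1)/n → Φ x = φ k x := by
    intro k hk x h1 h2
    exact Finset.sum_eq_single_of_mem k (Finset.mem_range.mpr hk)
      fun m _ hmk => hdisj k m hmk x h1.le h2.le
  set w : ℝ → ℝ := fun x => ∫ t in (0:ℝ)..x, Φ t with hwdef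
  have hwd : ∀ x, HasDerivAt w (Φ x) x := fun x =>
    intervalIntegral.integral_hasDerivAt_right (hΦc.intervalIntegrable _ _)
      ⟨Set.univ, Filter.univ_mem, hΦc.aestronglyMeasurable.restrict⟩ hΦc.continuousAt
  have hmono : Monotone w := by
    intro x y hxy
    have hsplit := intervalIntegral.integral_add_adjacent_intervals (μ := volume)
      (hΦc.intervalIntegrable 0 x) (hΦc.intervalIntegrable x y)
    have hnn : 0 ≤ ∫ t in x..y, Φ t :=
      intervalIntegral.integral_nonneg hxy fun t _ => hΦ0 t
    show (∫ t in (0:ℝ)..x, Φ t) ≤ ∫ t in (0:ℝ)..y, Φ t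
    linarith [hsplit]
  have hwk : ∀ k : ℕ, k ≤ n → w ((k:ℝ)/n) = (k:ℝ)/n := by
    intro k
    induction k with
    | zero => intro _; simp [hwdef]
    | succ k ih =>
      intro hk
      have hk' : k < n := Nat.lt_of_succ_le hk
      have ihh := ih hk'.le
      have hle : (k:ℝ)/n ≤ ((k:ℝ)+1)/n :=
        div_le_div_of_nonneg_right (by linarith) hn'.le
      have hsplit : w (((k:ℝ)+1)/n) = w ((k:ℝ)/n) + ∫ t in ((k:ℝ)/n)..(((k:ℝ)+1)/n), Φ t := by
        show (∫ t in (0:ℝ)..(((k:ℝ)+1)/n), Φ t) = _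
        rw [← intervalIntegral.integral_add_adjacent_intervals
          (hΦc.intervalIntegrable 0 ((k:ℝ)/n)) (hΦc.intervalIntegrable _ _)]
      have hφint : (∫ t in ((k:ℝ)/n)..(((k:ℝ)+1)/n), Φ t) = 1/n := by
        have hsum : (∫ t in ((k:ℝ)/n)..(((k:ℝ)+1)/n), Φ t)
            = ∑ m ∈ Finset.range n, ∫ t in ((k:ℝ)/n)..(((k:ℝ)+1)/n), φ m t :=
          intervalIntegral.integral_finset_sum fun m _ => (hφc m).intervalIntegrable _ _
        rw [hsum, Finset.sum_eq_single_of_mem k (Finset.mem_range.mpr hk')]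
        · exact (hφk k hk').1
        · intro m _ hmk
          have hzero : Set.EqOn (φ m) 0 (Set.uIcc ((k:ℝ)/n) (((k:ℝ)+1)/n)) := by
            intro x hx
            rw [Set.uIcc_of_le hle] at hx
            exact hdisj k m hmk x hx.1 hx.2
          rw [intervalIntegral.integral_congr hzero]
          simp
      have hcast : ((k+1:ℕ):ℝ) = (k:ℝ)+1 := by push_cast; ring
      rw [hcast, hsplit, ihh, hφint]
      ring
  have hclose : ∀ x ∈ Set.Ioo (0:ℝ) 1, |w x - x| ≤ (n:ℝ)⁻¹ := by
    intro x hx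
    set k : ℕ := ⌊x * n⌋₊ with hkdef
    have hx0 : 0 ≤ x * n := by nlinarith [hx.1]
    have h1 : (k:ℝ) ≤ x * n := Nat.floor_le hx0
    have h2 : x * n < (k:ℝ) + 1 := Nat.lt_floor_add_one _
    have hkn : k < n := by
      have hlt : x * n < (n:ℝ) := by nlinarith [hx.2]
      exact (Nat.floor_lt hx0).mpr (by exact_mod_cast hlt)
    have hxk1 : (k:ℝ)/n ≤ x := (div_le_iff₀ hn').mpr (by linarith)
    have hxk2 : x ≤ ((k:ℝ)+1)/n := (le_div_iff₀ hn').mpr (by linarith)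
    have hw1 : (k:ℝ)/n ≤ w x := by rw [← hwk k hkn.le]; exact hmono hxk1
    have hw2 : w x ≤ ((k:ℝ)+1)/n := by
      have hcast : ((k+1:ℕ):ℝ) = (k:ℝ)+1 := by push_cast; ring
      have := hwk (k+1) (Nat.succ_le_of_lt hkn)
      rw [hcast] at this
      rw [← this]
      exact hmono hxk2
    have hdiff : ((k:ℝ)+1)/n - (k:ℝ)/n = (n:ℝ)⁻¹ := by field_simp; ring
    rw [abs_le]
    constructor <;> linarith
  refine ⟨w, Φ, hΦc, hwd, hclose, ?_⟩
  have hcover : Set.Ioo (0:ℝ) 1 ⊆ ⋃ k : ℕ, Set.Ico ((k:ℝ)/n) (((k:ℝ)+1)/n) := by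
    intro x hx
    simp only [Set.mem_iUnion]
    have hx0 : 0 ≤ x * n := by nlinarith [hx.1]
    refine ⟨⌊x * n⌋₊, (div_le_iff₀ hn').mpr (Nat.floor_le hx0),
      (lt_div_iff₀ hn').mpr ?_⟩
    have := Nat.lt_floor_add_one (x * n)
    linarith
  have hterm : ∀ k : ℕ,
      (∫⁻ x in Set.Ico ((k:ℝ)/n) (((k:ℝ)+1)/n), ENNReal.ofReal (Φ x ^ 2 * g x))
        ≤ if k < n then ENNReal.ofReal ((n:ℝ)⁻¹^2 * (n:ℝ)⁻¹) else 0 := by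
    intro k
    have hIooIco : (volume : Measure ℝ).restrict (Set.Ico ((k:ℝ)/n) (((k:ℝ)+1)/n))
        = volume.restrict (Set.Ioo ((k:ℝ)/n) (((k:ℝ)+1)/n)) :=
      (Measure.restrict_congr_set Ioo_ae_eq_Ico).symm
    rw [show (∫⁻ x in Set.Ico ((k:ℝ)/n) (((k:ℝ)+1)/n), ENNReal.ofReal (Φ x ^ 2 * g x))
        = ∫⁻ x in Set.Ioo ((k:ℝ)/n) (((k:ℝ)+1)/n), ENNReal.ofReal (Φ x ^ 2 * g x) by
      rw [hIooIco]]
    by_cases hk : k < n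
    · rw [if_pos hk]
      refine le_trans (le_of_eq ?_) ((hφk k hk).2)
      refine setLIntegral_congr_fun_ae measurableSet_Ioo (ae_of_all _ fun x hx => ?_)
      rw [hΦeq k hk x hx.1 hx.2]
    · rw [if_neg hk]
      have hzero : ∀ x ∈ Set.Ioo ((k:ℝ)/n) (((k:ℝ)+1)/n), ENNReal.ofReal (Φ x ^ 2 * g x) = 0 := by
        intro x hx
        have hΦz : Φ x = 0 := by
          apply Finset.sum_eq_zero
          intro m hm
          apply hφv
          intro hmem
          have hmn : m < n := Finset.mem_range.mp hm
          have hmk : m + 1 ≤ k := Nat.succ_le_of_lt (lt_of_lt_of_le hmn (not_lt.mp hk))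
          have hc : ((m:ℝ)+1)/n ≤ (k:ℝ)/n :=
            div_le_div_of_nonneg_right (by exact_mod_cast hmk) hn'.le
          exact absurd hmem.2 (not_lt.mpr (le_trans hc hx.1.le))
        rw [hΦz]
        simp
      rw [setLIntegral_congr_fun_ae measurableSet_Ioo (ae_of_all _ hzero)]
      simp
  calc (∫⁻ x in Set.Ioo (0:ℝ) 1, ENNReal.ofReal (Φ x ^ 2 * g x))
      ≤ ∫⁻ x in ⋃ k : ℕ, Set.Ico ((k:ℝ)/n) (((k:ℝ)+1)/n), ENNReal.ofReal (Φ x ^ 2 * g x) :=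
        lintegral_mono_set hcover
    _ ≤ ∑' k : ℕ, ∫⁻ x in Set.Ico ((k:ℝ)/n) (((k:ℝ)+1)/n), ENNReal.ofReal (Φ x ^ 2 * g x) :=
        lintegral_iUnion_le _ _
    _ ≤ ∑' k : ℕ, if k < n then ENNReal.ofReal ((n:ℝ)⁻¹^2 * (n:ℝ)⁻¹) else 0 :=
        ENNReal.tsum_le_tsum hterm
    _ = ∑ k ∈ Finset.range n, if k < n then ENNReal.ofReal ((n:ℝ)⁻¹^2 * (n:ℝ)⁻¹) else 0 :=
        tsum_eq_sum fun k hk => if_neg (by simpa using hk)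
    _ = n * ENNReal.ofReal ((n:ℝ)⁻¹^2 * (n:ℝ)⁻¹) := by
        rw [Finset.sum_congr rfl fun k hk => if_pos (Finset.mem_range.mp hk)]
        simp [Finset.sum_const, nsmul_eq_mul]
    _ = ENNReal.ofReal ((n:ℝ)⁻¹^2) := by
        rw [← ENNReal.ofReal_natCast n, ← ENNReal.ofReal_mul (Nat.cast_nonneg n)]
        have hne : (n:ℝ) ≠ 0 := hn'.ne'
        congr 1
        field_simp


set_option maxHeartbeats 1000000 in
/-- On `Ω = (0,1)²` with `dμ = g(x) d𝓛²`, where `1/g` is non-integrable on every open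
subinterval, the projection `π₁(x,y) = x` admits the zero vector field as `μ`-gradient:
there are `C¹` functions `uₙ` on `Ω` with `uₙ → π₁` and `∇uₙ → 0` in `L²(μ)`. -/
theorem zero_gradient_of_first_coordinate
    (g : ℝ → ℝ) (hgmeas : Measurable g) (hgpos : ∀ t ∈ Set.Ioo (0:ℝ) 1, 0 < g t)
    (hgint : ∫⁻ t in Set.Ioo (0:ℝ) 1, ENNReal.ofReal (g t) ≠ ⊤)
    (hginv : ∀ a b : ℝ, 0 ≤ a → a < b → b ≤ 1 →
      ∫⁻ t in Set.Ioo a b, (ENNReal.ofReal (g t))⁻¹ = ⊤)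
    (Ω : Set (ℝ × ℝ)) (hΩ : Ω = Set.Ioo (0:ℝ) 1 ×ˢ Set.Ioo (0:ℝ) 1)
    (μ : Measure (ℝ × ℝ))
    (hμ : μ = (volume.restrict Ω).withDensity (fun p => ENNReal.ofReal (g p.1))) :
    ∃ u : ℕ → ℝ × ℝ → ℝ,
      (∀ n, ContDiffOn ℝ 1 (u n) Ω) ∧
      Tendsto (fun n => eLpNorm (fun p => u n p - p.1) 2 μ) atTop (nhds 0) ∧
      Tendsto (fun n =>
        eLpNorm (fun p => ((fderiv ℝ (u n) p (1, 0), fderiv ℝ (u n) p (0, 1)) : ℝ × ℝ))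
          2 μ) atTop (nhds 0) := by
  have hΩm : MeasurableSet Ω := by rw [hΩ]; exact measurableSet_Ioo.prod measurableSet_Ioo
  -- Fubini-type computation for functions of the first coordinate
  have fub : ∀ F : ℝ → ℝ≥0∞, Measurable F →
      (∫⁻ p, F p.1 ∂μ) = ∫⁻ x in Set.Ioo (0:ℝ) 1, ENNReal.ofReal (g x) * F x := by
    intro F hF
    rw [hμ, lintegral_withDensity_eq_lintegral_mul (volume.restrict Ω)
      (show Measurable fun p : ℝ × ℝ => ENNReal.ofReal (g p.1) from
        (hgmeas.comp measurable_fst).ennreal_ofReal)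
      (show Measurable fun p : ℝ × ℝ => F p.1 from hF.comp measurable_fst)]
    simp only [Pi.mul_apply]
    rw [hΩ, Measure.volume_eq_prod, ← Measure.prod_restrict,
      lintegral_prod _
        (show AEMeasurable (fun p : ℝ × ℝ => ENNReal.ofReal (g p.1) * F p.1)
            ((volume.restrict (Set.Ioo (0:ℝ) 1)).prod (volume.restrict (Set.Ioo (0:ℝ) 1))) from
          ((hgmeas.comp measurable_fst).ennreal_ofReal.mul (hF.comp measurable_fst)).aemeasurable)]
    simp [lintegral_const, Measure.restrict_apply_univ, Real.volume_Ioo]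
  have hμuniv : μ Set.univ ≠ ⊤ := by
    have h1 := fub (fun _ => 1) measurable_const
    simp only [mul_one, lintegral_one] at h1
    rw [h1]
    exact hgint
  -- construction per n
  have Hst : ∀ n : ℕ, ∃ w Φ : ℝ → ℝ, Continuous Φ ∧ (∀ x, HasDerivAt w (Φ x) x) ∧
      (∀ x ∈ Set.Ioo (0:ℝ) 1, |w x - x| ≤ ((n+1:ℕ):ℝ)⁻¹) ∧
      (∫⁻ x in Set.Ioo (0:ℝ) 1, ENNReal.ofReal (Φ x ^ 2 * g x))
        ≤ ENNReal.ofReal (((n+1:ℕ):ℝ)⁻¹^2) :=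
    fun n => stage g hgmeas hgpos hgint hginv (n+1) (Nat.succ_pos n)
  choose w Φ hΦc hwd hclose henergy using Hst
  refine ⟨fun n p => w n p.1, ?_, ?_, ?_⟩
  · intro n
    have hcd : ContDiff ℝ 1 (w n) := by
      rw [contDiff_one_iff_deriv]
      refine ⟨fun x => (hwd n x).differentiableAt, ?_⟩
      have hde : deriv (w n) = Φ n := funext fun x => (hwd n x).deriv
      rw [hde]; exact hΦc n
    exact (hcd.comp contDiff_fst).contDiffOn
  · -- first convergence
    have haeΩ : ∀ᵐ p ∂μ, p ∈ Ω := by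
      have hz : μ Ωᶜ = 0 := by
        rw [hμ, withDensity_apply _ hΩm.compl, Measure.restrict_restrict hΩm.compl,
          Set.compl_inter_self]
        simp
      rw [ae_iff]
      exact hz
    have hbound : ∀ n : ℕ, eLpNorm (fun p : ℝ × ℝ => w n p.1 - p.1) 2 μ
        ≤ μ Set.univ ^ (2:ℝ≥0∞).toReal⁻¹ * ENNReal.ofReal (((n+1:ℕ):ℝ)⁻¹) := by
      intro n
      apply eLpNorm_le_of_ae_bound
      filter_upwards [haeΩ] with p hp
      rw [Real.norm_eq_abs]
      have hp1 : p.1 ∈ Set.Ioo (0:ℝ) 1 := by rw [hΩ] at hp; exact hp.1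
      exact hclose n p.1 hp1
    have hC : μ Set.univ ^ (2:ℝ≥0∞).toReal⁻¹ ≠ ⊤ :=
      ENNReal.rpow_ne_top_of_nonneg (by norm_num) hμuniv
    have h0 : Tendsto (fun n : ℕ => ENNReal.ofReal (((n+1:ℕ):ℝ)⁻¹)) atTop (nhds 0) := by
      rw [show (0:ℝ≥0∞) = ENNReal.ofReal 0 by simp]
      apply ENNReal.tendsto_ofReal
      have h2 : Tendsto (fun n : ℕ => 1/((n:ℝ)+1)) atTop (nhds 0) :=
        tendsto_one_div_add_atTop_nhds_zero_nat
      simpa [one_div] using h2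
    have hlim : Tendsto (fun n : ℕ => μ Set.univ ^ (2:ℝ≥0∞).toReal⁻¹
        * ENNReal.ofReal (((n+1:ℕ):ℝ)⁻¹)) atTop (nhds 0) := by
      have := ENNReal.Tendsto.const_mul h0 (Or.inr hC)
      simpa using this
    exact tendsto_of_tendsto_of_tendsto_of_le_of_le tendsto_const_nhds hlim
      (fun n => zero_le) hbound
  · -- convergence of the gradients
    have haeΩ : ∀ᵐ p ∂μ, p ∈ Ω := by
      have hz : μ Ωᶜ = 0 := by
        rw [hμ, withDensity_apply _ hΩm.compl, Measure.restrict_restrict hΩm.compl,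
          Set.compl_inter_self]
        simp
      rw [ae_iff]
      exact hz
    have hfder : ∀ n (p : ℝ × ℝ), fderiv ℝ (fun q : ℝ × ℝ => w n q.1) p
        = (Φ n p.1) • (ContinuousLinearMap.fst ℝ ℝ ℝ) := by
      intro n p
      have h1 : HasFDerivAt (fun q : ℝ × ℝ => w n q.1)
          ((Φ n p.1) • (ContinuousLinearMap.fst ℝ ℝ ℝ)) p :=
        (hwd n p.1).comp_hasFDerivAt p hasFDerivAt_fst
      exact h1.fderiv
    have heq : ∀ n, (fun p : ℝ × ℝ =>
        ((fderiv ℝ (fun q : ℝ × ℝ => w n q.1) p (1, 0),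
          fderiv ℝ (fun q : ℝ × ℝ => w n q.1) p (0, 1)) : ℝ × ℝ))
        = fun p : ℝ × ℝ => ((Φ n p.1, 0) : ℝ × ℝ) := by
      intro n
      funext p
      rw [hfder n p]
      simp
    have hb : ∀ n : ℕ, eLpNorm (fun p : ℝ × ℝ => ((Φ n p.1, 0) : ℝ × ℝ)) 2 μ
        ≤ ENNReal.ofReal (((n+1:ℕ):ℝ)⁻¹) := by
      intro n
      rw [eLpNorm_eq_lintegral_rpow_enorm_toReal two_ne_zero ENNReal.ofNat_ne_top]
      simp only [ENNReal.toReal_ofNat, enorm_eq_nnnorm]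
      have hnn : (fun p : ℝ × ℝ => (‖((Φ n p.1, 0) : ℝ × ℝ)‖₊ : ℝ≥0∞) ^ (2:ℝ))
          = fun p : ℝ × ℝ => (fun x => ((‖Φ n x‖₊ : ℝ≥0∞)) ^ (2:ℝ)) p.1 := by
        funext p
        congr 2
        rw [Prod.nnnorm_def]
        simp
      rw [hnn, fub _ ((hΦc n).measurable.nnnorm.coe_nnreal_ennreal.pow_const _)]
      have hpt : ∀ x ∈ Set.Ioo (0:ℝ) 1,
          ENNReal.ofReal (g x) * (‖Φ n x‖₊ : ℝ≥0∞) ^ (2:ℝ)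
            = ENNReal.ofReal (Φ n x ^ 2 * g x) := by
        intro x hx
        rw [rpow_two', ← enorm_eq_nnnorm, Real.enorm_eq_ofReal_abs, ← ENNReal.ofReal_pow (abs_nonneg _),
          sq_abs, mul_comm, ← ENNReal.ofReal_mul (sq_nonneg _)]
      rw [setLIntegral_congr_fun_ae measurableSet_Ioo (ae_of_all _ hpt)]
      calc (∫⁻ x in Set.Ioo (0:ℝ) 1, ENNReal.ofReal (Φ n x ^ 2 * g x)) ^ (1/(2:ℝ))
          ≤ (ENNReal.ofReal (((n+1:ℕ):ℝ)⁻¹ ^ 2)) ^ (1/(2:ℝ)) :=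
            ENNReal.rpow_le_rpow (henergy n) (by norm_num)
        _ = ENNReal.ofReal (((n+1:ℕ):ℝ)⁻¹) := by
            rw [ENNReal.ofReal_pow (by positivity), ← rpow_two', ← ENNReal.rpow_mul]
            norm_num
    have hrw : ∀ n : ℕ, eLpNorm (fun p : ℝ × ℝ =>
        ((fderiv ℝ (fun q : ℝ × ℝ => w n q.1) p (1, 0),
          fderiv ℝ (fun q : ℝ × ℝ => w n q.1) p (0, 1)) : ℝ × ℝ)) 2 μ
        = eLpNorm (fun p : ℝ × ℝ => ((Φ n p.1, 0) : ℝ × ℝ)) 2 μ := fun n => by rw [heq n]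
    have h0 : Tendsto (fun n : ℕ => ENNReal.ofReal (((n+1:ℕ):ℝ)⁻¹)) atTop (nhds 0) := by
      rw [show (0:ℝ≥0∞) = ENNReal.ofReal 0 by simp]
      apply ENNReal.tendsto_ofReal
      have h2 : Tendsto (fun n : ℕ => 1/((n:ℝ)+1)) atTop (nhds 0) :=
        tendsto_one_div_add_atTop_nhds_zero_nat
      simpa [one_div] using h2
    refine tendsto_of_tendsto_of_tendsto_of_le_of_le tendsto_const_nhds h0
      (fun n => zero_le) (fun n => ?_)
    rw [hrw n]
    exact hb n
end

section
/- Let g : (0,1) → (0,∞) be measurable with ∫₀¹ g(t) dt < ∞, let Ω = (0,1)², and let μ be the measure on Ω with density f(x,y) = g(x) with respect to 𝓛². If (u_n) is a sequence of continuously differentiable functions on Ω with u_n → 0 in L²(μ) and ∇u_n → v = (v₁, v₂) in L²(μ; ℝ²), then v₂ = 0 μ-almost everywhere. Consequently the vertical direction ℝ·e₂ is contained in the tangent space to μ at μ-a.e. point. -/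
set_option maxHeartbeats 1000000
open MeasureTheory Filter Set
open scoped ENNReal NNReal ContDiff


lemma aux_tendsto_lintegral_mul {μ : Measure (ℝ×ℝ)} [IsFiniteMeasure μ]
    {w : ℕ → ℝ×ℝ → ℝ} {φ : ℝ×ℝ → ℝ} {C : ℝ}
    (hw : ∀ n, AEStronglyMeasurable (w n) μ) (hC : ∀ p, ‖φ p‖ ≤ C)
    (hw0 : Tendsto (fun n => eLpNorm (w n) 2 μ) atTop (nhds 0)) :
    Tendsto (fun n => ∫⁻ p, ‖φ p * w n p‖₊ ∂μ) atTop (nhds 0) := by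
  set m : ℝ≥0∞ := μ univ ^ (1 / (1:ℝ≥0∞).toReal - 1 / (2:ℝ≥0∞).toReal) with hm
  have hmne : m ≠ ⊤ := by
    apply ENNReal.rpow_ne_top_of_nonneg _ (measure_ne_top μ univ)
    norm_num
  have hb : ∀ n, ∫⁻ p, ‖φ p * w n p‖₊ ∂μ
      ≤ ENNReal.ofReal C * (eLpNorm (w n) 2 μ * m) := by
    intro n
    have h1 : ∫⁻ p, ‖φ p * w n p‖₊ ∂μ ≤ ∫⁻ p, ENNReal.ofReal C * ‖w n p‖₊ ∂μ := by
      refine lintegral_mono fun p => ?_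
      rw [nnnorm_mul, ENNReal.coe_mul]
      refine mul_le_mul_left ?_ _
      rw [← ENNReal.ofReal_coe_nnreal, coe_nnnorm]
      exact ENNReal.ofReal_le_ofReal (hC p)
    have h2 : ∫⁻ p, ENNReal.ofReal C * ‖w n p‖₊ ∂μ
        = ENNReal.ofReal C * eLpNorm (w n) 1 μ := by
      rw [lintegral_const_mul' _ _ ENNReal.ofReal_ne_top, eLpNorm_one_eq_lintegral_enorm]; rfl
    have h3 : eLpNorm (w n) 1 μ ≤ eLpNorm (w n) 2 μ * m :=
      eLpNorm_le_eLpNorm_mul_rpow_measure_univ one_le_two (hw n)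
    calc ∫⁻ p, ‖φ p * w n p‖₊ ∂μ ≤ ENNReal.ofReal C * eLpNorm (w n) 1 μ := h1.trans h2.le
    _ ≤ ENNReal.ofReal C * (eLpNorm (w n) 2 μ * m) := mul_le_mul_right h3 _
  have hB : Tendsto (fun n => ENNReal.ofReal C * (eLpNorm (w n) 2 μ * m)) atTop (nhds 0) := by
    have h1 : Tendsto (fun n => eLpNorm (w n) 2 μ * m) atTop (nhds (0 * m)) :=
      ENNReal.Tendsto.mul_const hw0 (Or.inr hmne)
    rw [zero_mul] at h1
    have h2 := ENNReal.Tendsto.const_mul (b := (0:ℝ≥0∞)) (a := ENNReal.ofReal C) h1 (Or.inr ENNReal.ofReal_ne_top)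
    rwa [mul_zero] at h2
  exact tendsto_of_tendsto_of_tendsto_of_le_of_le tendsto_const_nhds hB
    (fun n => zero_le) hb

/-- On `Ω = (0,1)²` with `dμ = g(x) d𝓛²` (density depending only on the first variable),
any `μ`-gradient `v = (v₁, v₂)` of `0` has vanishing second component `μ`-a.e.
Consequently `ℝ·e₂ ⊆ T_μ(x)` for `μ`-a.e. `x`. -/
theorem second_component_of_gradient_of_zero_vanishes
    (g : ℝ → ℝ) (hgmeas : Measurable g) (hgpos : ∀ t ∈ Set.Ioo (0:ℝ) 1, 0 < g t)
    (hgint : ∫⁻ t in Set.Ioo (0:ℝ) 1, ENNReal.ofReal (g t) ≠ ⊤)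
    (Ω : Set (ℝ × ℝ)) (hΩ : Ω = Set.Ioo (0:ℝ) 1 ×ˢ Set.Ioo (0:ℝ) 1)
    (μ : Measure (ℝ × ℝ))
    (hμ : μ = (volume.restrict Ω).withDensity (fun p => ENNReal.ofReal (g p.1)))
    (v : ℝ × ℝ → ℝ × ℝ) (hv : MemLp v 2 μ)
    (u : ℕ → ℝ × ℝ → ℝ) (hu : ∀ n, ContDiffOn ℝ 1 (u n) Ω)
    (hu0 : Tendsto (fun n => eLpNorm (u n) 2 μ) atTop (nhds 0))
    (hugrad : Tendsto (fun n =>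
      eLpNorm (fun p => ((fderiv ℝ (u n) p (1, 0), fderiv ℝ (u n) p (0, 1)) : ℝ × ℝ) - v p)
        2 μ) atTop (nhds 0)) :
    ∀ᵐ p ∂μ, (v p).2 = 0 := by
  have hIopen : IsOpen (Set.Ioo (0:ℝ) 1) := isOpen_Ioo
  have hΩopen : IsOpen Ω := by rw [hΩ]; exact hIopen.prod hIopen
  have hΩmeas : MeasurableSet Ω := hΩopen.measurableSet
  set ν : Measure (ℝ × ℝ) := volume.restrict Ω with hν
  set ρ : ℝ × ℝ → ℝ≥0 := fun p => Real.toNNReal (g p.1) with hρ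
  have hρmeas : Measurable ρ := (hgmeas.comp measurable_fst).real_toNNReal
  have hdens : (fun p : ℝ×ℝ => ENNReal.ofReal (g p.1)) = fun p => ((ρ p : ℝ≥0) : ℝ≥0∞) := rfl
  have hμν : μ = ν.withDensity fun p => ((ρ p : ℝ≥0) : ℝ≥0∞) := by rw [hμ, hdens]
  have hprod : ν = ((volume : Measure ℝ).restrict (Set.Ioo (0:ℝ) 1)).prod
      (volume.restrict (Set.Ioo (0:ℝ) 1)) := by
    rw [hν, hΩ, Measure.volume_eq_prod]; exact (Measure.prod_restrict _ _).symm
  -- μ is a finite measure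
  have hμfin : IsFiniteMeasure μ := by
    constructor
    rw [hμν, withDensity_apply _ MeasurableSet.univ, Measure.restrict_univ, hprod]
    rw [lintegral_prod _ hρmeas.coe_nnreal_ennreal.aemeasurable]
    have hinner : ∀ x : ℝ, ∫⁻ y, ((ρ (x, y) : ℝ≥0∞)) ∂(volume.restrict (Set.Ioo (0:ℝ) 1))
        = ENNReal.ofReal (g x) := by
      intro x
      have hc : ∫⁻ y, ((ρ (x, y) : ℝ≥0∞)) ∂(volume.restrict (Set.Ioo (0:ℝ) 1))
          = ∫⁻ _, ENNReal.ofReal (g x) ∂(volume.restrict (Set.Ioo (0:ℝ) 1)) := rfl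
      rw [hc, lintegral_const, Measure.restrict_apply_univ, Real.volume_Ioo]
      norm_num
    calc ∫⁻ x, ∫⁻ y, ((ρ (x, y) : ℝ≥0∞)) ∂(volume.restrict (Set.Ioo (0:ℝ) 1))
          ∂(volume.restrict (Set.Ioo (0:ℝ) 1))
        = ∫⁻ x in Set.Ioo (0:ℝ) 1, ENNReal.ofReal (g x) := by
          exact lintegral_congr fun x => hinner x
      _ < ⊤ := hgint.lt_top
  haveI := hμfin
  have hμac : μ ≪ ν := by rw [hμν]; exact withDensity_absolutelyContinuous _ _
  -- conversion of integrals / integrability between μ and ν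
  have hInt_iff : ∀ h : ℝ × ℝ → ℝ, Integrable h μ ↔ Integrable (fun p => (ρ p : ℝ) * h p) ν := by
    intro h; rw [hμν]
    exact integrable_withDensity_iff_integrable_coe_smul hρmeas
  have hInt_eq : ∀ h : ℝ × ℝ → ℝ, ∫ p, h p ∂μ = ∫ p, (ρ p : ℝ) * h p ∂ν := by
    intro h; rw [hμν, integral_withDensity_eq_integral_smul hρmeas h]; rfl
  -- basic MemLp / measurability facts
  have hv2 : MemLp (fun p => (v p).2) 2 μ :=
    hv.of_le (continuous_snd.comp_aestronglyMeasurable hv.1)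
      (Eventually.of_forall fun p => norm_snd_le (v p))
  have hv2int : Integrable (fun p => (v p).2) μ := hv2.integrable one_le_two
  have hum : ∀ n, AEStronglyMeasurable (u n) μ := fun n =>
    ((hu n).continuousOn.aestronglyMeasurable hΩmeas).mono_ac hμac
  have hdm : ∀ n, AEStronglyMeasurable (fun p => fderiv ℝ (u n) p (0,1)) μ := fun n =>
    (measurable_fderiv_apply_const ℝ (u n) ((0:ℝ),(1:ℝ))).aestronglyMeasurable
  have hDm : ∀ n, AEStronglyMeasurable
      (fun p => ((fderiv ℝ (u n) p (1, 0), fderiv ℝ (u n) p (0, 1)) : ℝ × ℝ)) μ := fun n =>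
    ((measurable_fderiv_apply_const ℝ (u n) ((1:ℝ),(0:ℝ))).prodMk
      (measurable_fderiv_apply_const ℝ (u n) ((0:ℝ),(1:ℝ)))).aestronglyMeasurable
  -- eventual integrability
  have htop : ∀ᶠ n in atTop, eLpNorm (fun p =>
      ((fderiv ℝ (u n) p (1, 0), fderiv ℝ (u n) p (0, 1)) : ℝ × ℝ) - v p) 2 μ < 1 :=
    hugrad.eventually (eventually_lt_nhds zero_lt_one)
  have hevd : ∀ᶠ n in atTop, MemLp (fun p => fderiv ℝ (u n) p (0,1)) 2 μ := by
    filter_upwards [htop] with n hn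
    have hD : MemLp (fun p =>
        ((fderiv ℝ (u n) p (1, 0), fderiv ℝ (u n) p (0, 1)) : ℝ × ℝ) - v p) 2 μ :=
      ⟨(hDm n).sub hv.1, hn.trans ENNReal.one_lt_top⟩
    have hD' : MemLp (fun p =>
        ((fderiv ℝ (u n) p (1, 0), fderiv ℝ (u n) p (0, 1)) : ℝ × ℝ)) 2 μ := by
      have h := hD.add hv
      have heq : ((fun p => ((fderiv ℝ (u n) p (1, 0), fderiv ℝ (u n) p (0, 1)) : ℝ × ℝ) - v p)
          + v) = fun p => ((fderiv ℝ (u n) p (1, 0), fderiv ℝ (u n) p (0, 1)) : ℝ × ℝ) := by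
        funext p; simp
      rwa [heq] at h
    exact hD'.of_le (hdm n) (Eventually.of_forall fun p =>
      norm_snd_le ((fderiv ℝ (u n) p (1, 0), fderiv ℝ (u n) p (0, 1)) : ℝ × ℝ))
  have hevu : ∀ᶠ n in atTop, MemLp (u n) 2 μ := by
    filter_upwards [hu0.eventually (eventually_lt_nhds zero_lt_one)] with n hn
    exact ⟨hum n, hn.trans ENNReal.one_lt_top⟩
  -- the second components converge in L²
  have hdiff2 : Tendsto (fun n =>
      eLpNorm (fun p => fderiv ℝ (u n) p (0,1) - (v p).2) 2 μ) atTop (nhds 0) := by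
    refine tendsto_of_tendsto_of_tendsto_of_le_of_le tendsto_const_nhds hugrad
      (fun n => zero_le) (fun n => ?_)
    refine eLpNorm_mono fun p => ?_
    have : fderiv ℝ (u n) p (0,1) - (v p).2
        = (((fderiv ℝ (u n) p (1, 0), fderiv ℝ (u n) p (0, 1)) : ℝ × ℝ) - v p).2 := by
      simp [Prod.snd_sub]
    rw [this]
    exact norm_snd_le _
  -- the target function for the distribution lemma
  set F : ℝ × ℝ → ℝ := fun p => (ρ p : ℝ) * (v p).2 with hF
  have hFint : Integrable F ν := (hInt_iff _).1 hv2int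
  -- main step: for every test function φ supported in Ω
  have hmain : ∀ φ : ℝ × ℝ → ℝ, ContDiff ℝ ∞ φ → HasCompactSupport φ → tsupport φ ⊆ Ω →
      ∫ p, φ p • F p ∂(volume : Measure (ℝ×ℝ)) = 0 := by
    intro φ hφ hφc hφΩ
    obtain ⟨C, hC⟩ := hφc.exists_bound_of_continuous hφ.continuous
    have hφcont : Continuous φ := hφ.continuous
    have h1le : (1 : WithTop ℕ∞) ≤ (∞ : WithTop ℕ∞) := by exact_mod_cast le_top
    set φy : ℝ×ℝ → ℝ := fun p => fderiv ℝ φ p ((0:ℝ),(1:ℝ)) with hφydef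
    have hφycont : Continuous φy :=
      (ContinuousLinearMap.apply ℝ ℝ ((0:ℝ),(1:ℝ))).continuous.comp
        (hφ.continuous_fderiv (by simp))
    have hφ0 : ∀ p, p ∉ tsupport φ → φ p = 0 := fun p hp => image_eq_zero_of_notMem_tsupport hp
    have hφy0 : ∀ p, p ∉ tsupport φ → φy p = 0 := by
      intro p hp
      have h0 : fderiv ℝ φ p = 0 := by
        by_contra hne
        exact hp (support_fderiv_subset ℝ (Function.mem_support.2 hne))
      simp [hφydef, h0]
    have hφyc : HasCompactSupport φy :=
      HasCompactSupport.intro hφc hφy0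
    obtain ⟨C', hC'⟩ := hφyc.exists_bound_of_continuous hφycont
    -- the y-range of the support
    obtain ⟨a, b, ha, hb1, hab, hKy⟩ : ∃ a b : ℝ, 0 < a ∧ b < 1 ∧ a ≤ b ∧
        ∀ p ∈ tsupport φ, p.2 ∈ Set.Icc a b := by
      rcases (tsupport φ).eq_empty_or_nonempty with hK | hK
      · exact ⟨1/2, 1/2, by norm_num, by norm_num, le_rfl, fun p hp => by simp [hK] at hp⟩
      · have hTc : IsCompact (Prod.snd '' tsupport φ) := hφc.image continuous_snd
        have hTne : (Prod.snd '' tsupport φ).Nonempty := hK.image _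
        have hTsub : Prod.snd '' tsupport φ ⊆ Set.Ioo (0:ℝ) 1 := by
          rintro y ⟨p, hp, rfl⟩
          have hmem := hφΩ hp
          rw [hΩ] at hmem
          exact hmem.2
        refine ⟨sInf (Prod.snd '' tsupport φ), sSup (Prod.snd '' tsupport φ),
          (hTsub (hTc.sInf_mem hTne)).1, (hTsub (hTc.sSup_mem hTne)).2,
          csInf_le_csSup hTne hTc.bddBelow hTc.bddAbove, ?_⟩
        intro p hp
        exact ⟨csInf_le hTc.bddBelow ⟨p, hp, rfl⟩, le_csSup hTc.bddAbove ⟨p, hp, rfl⟩⟩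
    set a' : ℝ := a/2 with ha'def
    set b' : ℝ := (b+1)/2 with hb'def
    have ha' : 0 < a' := half_pos ha
    have ha'a : a' < a := half_lt_self ha
    have hbb' : b < b' := by rw [hb'def]; linarith
    have hb' : b' < 1 := by rw [hb'def]; linarith
    have ha'b' : a' ≤ b' := by linarith
    have hIccsub : Set.Icc a b ⊆ Set.Ioo (0:ℝ) 1 :=
      fun y hy => ⟨lt_of_lt_of_le ha hy.1, lt_of_le_of_lt hy.2 hb1⟩
    have hIccsub' : Set.Icc a b ⊆ Set.Ioo a' b' :=
      fun y hy => ⟨lt_of_lt_of_le ha'a hy.1, lt_of_le_of_lt hy.2 hbb'⟩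
    have hIcc'I : Set.Icc a' b' ⊆ Set.Ioo (0:ℝ) 1 :=
      fun y hy => ⟨lt_of_lt_of_le ha' hy.1, lt_of_le_of_lt hy.2 hb'⟩
    -- Step 1: reduce to ∫ φ v₂ dμ = 0
    have hred : ∫ p, φ p • F p ∂(volume : Measure (ℝ×ℝ)) = ∫ p, φ p * (v p).2 ∂μ := by
      rw [hInt_eq (fun p => φ p * (v p).2)]
      have h1 : ∫ p, φ p • F p ∂(volume : Measure (ℝ×ℝ)) = ∫ p in Ω, φ p • F p ∂volume :=
        (setIntegral_eq_integral_of_forall_compl_eq_zero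
          (fun p hp => by simp [hφ0 p fun hmem => hp (hφΩ hmem)])).symm
      rw [h1, ← hν]
      exact integral_congr_ae (Eventually.of_forall fun p => by
        simp only [hF, smul_eq_mul]; ring)
    rw [hred]
    -- integrability
    have hφv2int : Integrable (fun p => φ p * (v p).2) μ :=
      hv2int.bdd_mul hφcont.aestronglyMeasurable (Eventually.of_forall hC)
    have hSint : ∀ᶠ n in atTop, Integrable (fun p => φ p * fderiv ℝ (u n) p ((0:ℝ),(1:ℝ))) μ := by
      filter_upwards [hevd] with n hn
      exact (hn.integrable one_le_two).bdd_mul hφcont.aestronglyMeasurable (Eventually.of_forall hC)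
    have hTint : ∀ᶠ n in atTop, Integrable (fun p => φy p * u n p) μ := by
      filter_upwards [hevu] with n hn
      exact (hn.integrable one_le_two).bdd_mul hφycont.aestronglyMeasurable (Eventually.of_forall hC')
    -- limit of ∫ φ ∂ₓ₂ uₙ dμ
    have hStend : Tendsto (fun n => ∫ p, φ p * fderiv ℝ (u n) p ((0:ℝ),(1:ℝ)) ∂μ) atTop
        (nhds (∫ p, φ p * (v p).2 ∂μ)) := by
      refine tendsto_integral_of_L1 _ hφv2int.aestronglyMeasurable hSint ?_
      have haux := aux_tendsto_lintegral_mul (μ := μ)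
        (w := fun n p => fderiv ℝ (u n) p ((0:ℝ),(1:ℝ)) - (v p).2) (φ := φ) (C := C)
        (fun n => ((measurable_fderiv_apply_const ℝ (u n)
            ((0:ℝ),(1:ℝ))).aestronglyMeasurable.sub
          (continuous_snd.comp_aestronglyMeasurable hv.1))) hC hdiff2
      have heq : (fun n => ∫⁻ p,
            (‖φ p * fderiv ℝ (u n) p ((0:ℝ),(1:ℝ)) - φ p * (v p).2‖₊ : ℝ≥0∞) ∂μ)
          = fun n => ∫⁻ p,
            (‖φ p * (fderiv ℝ (u n) p ((0:ℝ),(1:ℝ)) - (v p).2)‖₊ : ℝ≥0∞) ∂μ := by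
        funext n
        refine lintegral_congr fun p => ?_
        rw [← mul_sub]
      change Tendsto (fun n => ∫⁻ p,
            (‖φ p * fderiv ℝ (u n) p ((0:ℝ),(1:ℝ)) - φ p * (v p).2‖₊ : ℝ≥0∞) ∂μ) atTop (nhds 0)
      rw [heq]
      exact haux
    -- limit of ∫ (∂ₓ₂ φ) uₙ dμ
    have hTtend : Tendsto (fun n => ∫ p, φy p * u n p ∂μ) atTop (nhds 0) := by
      have haux := aux_tendsto_lintegral_mul (μ := μ) (w := u) (φ := φy) (C := C') hum hC' hu0
      have h0 := tendsto_integral_of_L1 (μ := μ) (fun _ : ℝ×ℝ => (0:ℝ))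
        (integrable_zero _ _ _).aestronglyMeasurable hTint (by simpa [enorm_eq_nnnorm] using haux)
      simpa using h0
    -- integration by parts on each vertical line
    have hIBP : ∀ᶠ n in atTop, (∫ p, φ p * fderiv ℝ (u n) p ((0:ℝ),(1:ℝ)) ∂μ)
        + (∫ p, φy p * u n p ∂μ) = 0 := by
      filter_upwards [hSint, hTint] with n hind hinu
      rw [← integral_add hind hinu, hInt_eq]
      have hint2 : Integrable
          (fun p => (ρ p : ℝ) * (φ p * fderiv ℝ (u n) p ((0:ℝ),(1:ℝ)) + φy p * u n p)) ν :=
        (hInt_iff _).1 (hind.add hinu)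
      rw [hprod] at hint2 ⊢
      rw [integral_prod _ hint2]
      refine setIntegral_eq_zero_of_forall_eq_zero fun x hx => ?_
      have hρxy : ∀ y : ℝ, ((ρ (x, y) : ℝ)) = ((Real.toNNReal (g x) : ℝ)) := fun y => rfl
      simp only [hρxy]
      rw [integral_const_mul]
      suffices h : (∫ y in Set.Ioo (0:ℝ) 1,
          (φ (x,y) * fderiv ℝ (u n) (x,y) ((0:ℝ),(1:ℝ)) + φy (x,y) * u n (x,y)) ∂volume) = 0 by
        rw [h, mul_zero]
      set w : ℝ → ℝ := fun y => φ (x,y) * u n (x,y) with hwdef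
      set w' : ℝ → ℝ := fun y =>
        φ (x,y) * fderiv ℝ (u n) (x,y) ((0:ℝ),(1:ℝ)) + φy (x,y) * u n (x,y) with hw'def
      have hvanish : ∀ y : ℝ, y ∉ Set.Icc a b → w' y = 0 := by
        intro y hy
        have hns : (x, y) ∉ tsupport φ := fun hmem => hy (hKy _ hmem)
        simp [hw'def, hφ0 _ hns, hφy0 _ hns]
      have hw0 : ∀ y : ℝ, y ∉ Set.Icc a b → w y = 0 := by
        intro y hy
        have hns : (x, y) ∉ tsupport φ := fun hmem => hy (hKy _ hmem)
        simp [hwdef, hφ0 _ hns]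
      have hslice_deriv : ∀ y ∈ Set.uIcc a' b', HasDerivAt w (w' y) y := by
        intro y hy
        rw [Set.uIcc_of_le ha'b'] at hy
        have hyI : y ∈ Set.Ioo (0:ℝ) 1 := hIcc'I hy
        have hmem : (x, y) ∈ Ω := by rw [hΩ]; exact ⟨hx, hyI⟩
        have hcurve : HasDerivAt (fun t : ℝ => ((x, t) : ℝ×ℝ)) ((0:ℝ), (1:ℝ)) y :=
          (hasDerivAt_const y x).prodMk (hasDerivAt_id y)
        have hud : DifferentiableAt ℝ (u n) (x, y) :=
          ((hu n).differentiableOn one_ne_zero).differentiableAt (hΩopen.mem_nhds hmem)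
        have hus : HasDerivAt (fun t => u n (x, t)) (fderiv ℝ (u n) (x, y) ((0:ℝ),(1:ℝ))) y :=
          hud.hasFDerivAt.comp_hasDerivAt y hcurve
        have hφd : DifferentiableAt ℝ φ (x, y) := (hφ.differentiable (by simp)).differentiableAt
        have hφs : HasDerivAt (fun t => φ (x, t)) (φy (x, y)) y :=
          hφd.hasFDerivAt.comp_hasDerivAt y hcurve
        have hmul := hφs.mul hus
        rw [add_comm] at hmul
        exact hmul
      have hslice_cont : ContinuousOn w' (Set.uIcc a' b') := by
        rw [Set.uIcc_of_le ha'b']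
        have hslc : Continuous (fun t : ℝ => ((x, t) : ℝ×ℝ)) := Continuous.prodMk_right x
        have hmapsto : Set.MapsTo (fun t : ℝ => ((x, t) : ℝ×ℝ)) (Set.Icc a' b') Ω := by
          intro y hy; rw [hΩ]; exact ⟨hx, hIcc'I hy⟩
        have hd_cont : ContinuousOn (fun y => fderiv ℝ (u n) (x, y) ((0:ℝ),(1:ℝ)))
            (Set.Icc a' b') := by
          have h1 : ContinuousOn (fderiv ℝ (u n)) Ω :=
            (hu n).continuousOn_fderiv_of_isOpen hΩopen le_rfl
          exact (ContinuousLinearMap.apply ℝ ℝ ((0:ℝ),(1:ℝ))).continuous.comp_continuousOn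
            (h1.comp hslc.continuousOn hmapsto)
        have hu_cont : ContinuousOn (fun y => u n (x, y)) (Set.Icc a' b') :=
          (hu n).continuousOn.comp hslc.continuousOn hmapsto
        exact ((hφcont.comp hslc).continuousOn.mul hd_cont).add
          ((hφycont.comp hslc).continuousOn.mul hu_cont)
      have hFTC : ∫ y in a'..b', w' y = w b' - w a' :=
        intervalIntegral.integral_eq_sub_of_hasDerivAt hslice_deriv
          hslice_cont.intervalIntegrable
      have hwa' : w a' = 0 := hw0 a' (fun hmem => absurd hmem.1 (not_le.2 ha'a))
      have hwb' : w b' = 0 := hw0 b' (fun hmem => absurd hmem.2 (not_le.2 hbb'))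
      have e1 : ∫ y in Set.Ioo (0:ℝ) 1, w' y ∂volume = ∫ y, w' y ∂volume :=
        setIntegral_eq_integral_of_forall_compl_eq_zero fun y hy =>
          hvanish y (fun hmem => hy (hIccsub hmem))
      have e2 : ∫ y in Set.Ioo a' b', w' y ∂volume = ∫ y, w' y ∂volume :=
        setIntegral_eq_integral_of_forall_compl_eq_zero fun y hy =>
          hvanish y (fun hmem => hy (hIccsub' hmem))
      calc ∫ y in Set.Ioo (0:ℝ) 1, w' y ∂volume
          = ∫ y in Set.Ioo a' b', w' y ∂volume := by rw [e1, e2]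
        _ = ∫ y in Set.Ioc a' b', w' y ∂volume := integral_Ioc_eq_integral_Ioo.symm
        _ = ∫ y in a'..b', w' y := (intervalIntegral.integral_of_le ha'b').symm
        _ = 0 := by rw [hFTC, hwa', hwb', sub_zero]
    -- combine
    have hsum : Tendsto (fun n => (∫ p, φ p * fderiv ℝ (u n) p ((0:ℝ),(1:ℝ)) ∂μ)
        + ∫ p, φy p * u n p ∂μ) atTop (nhds ((∫ p, φ p * (v p).2 ∂μ) + 0)) :=
      hStend.add hTtend
    have hzero : Tendsto (fun n => (∫ p, φ p * fderiv ℝ (u n) p ((0:ℝ),(1:ℝ)) ∂μ)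
        + ∫ p, φy p * u n p ∂μ) atTop (nhds 0) := by
      refine Tendsto.congr' ?_ tendsto_const_nhds
      filter_upwards [hIBP] with n hn using hn.symm
    have hfin := tendsto_nhds_unique hsum hzero
    linarith
  have key : ∀ᵐ p ∂(volume : Measure (ℝ×ℝ)), p ∈ Ω → F p = 0 :=
    hΩopen.ae_eq_zero_of_integral_contDiff_smul_eq_zero
      ((show IntegrableOn F Ω volume from hFint).locallyIntegrableOn) hmain
  -- conclude
  rw [hμν]
  rw [ae_withDensity_iff (hρmeas.coe_nnreal_ennreal)]
  have h1 : ∀ᵐ p ∂ν, F p = 0 := (ae_restrict_iff' hΩmeas).2 key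
  have h2 : ∀ᵐ p ∂ν, p ∈ Ω := ae_restrict_mem hΩmeas
  filter_upwards [h1, h2] with p hFp hpΩ _
  have hgp : 0 < g p.1 := by
    rw [hΩ] at hpΩ; exact hgpos _ hpΩ.1
  have : (ρ p : ℝ) = g p.1 := Real.coe_toNNReal _ hgp.le
  rcases mul_eq_zero.1 hFp with h | h
  · exact absurd h (by rw [this]; exact hgp.ne')
  · exact h
end
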